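/- arXiv:1001.2124 — 6 statements merged into one kernel-verified Lean document; each statement's English description precedes it below -/
import Mathlib

section
/- Let α > 0 and let S = {z ∈ ℂ : |Re z| < π/(2α)} be the vertical strip. If f is holomorphic on S with |f(z)| < 1 for all z ∈ S and f(0) = 0, then for every real number y one has |f(iy)| ≤ tanh(α|y|/2). -/
noncomputable section

/-- A real-valued function is harmonic on `Ω`: twice continuously differentiable
with vanishing Laplacian. -/
def HarmonicOnReal (u : ℂ → ℝ) (Ω : Set ℂ) : Prop :=
  ContDiffOn ℝ 2 u Ω ∧ ∀ z ∈ Ω,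
    fderiv ℝ (fun w => fderiv ℝ u w 1) z 1 +
    fderiv ℝ (fun w => fderiv ℝ u w Complex.I) z Complex.I = 0

/-- A complex-valued map is harmonic on `Ω` if its real and imaginary parts are. -/
def HarmonicMapOn (h : ℂ → ℂ) (Ω : Set ℂ) : Prop :=
  HarmonicOnReal (fun z => (h z).re) Ω ∧ HarmonicOnReal (fun z => (h z).im) Ω

/-- `h` is a harmonic homeomorphism from `Ω` onto `Ω'`. -/
def IsHarmonicHomeoOn (h : ℂ → ℂ) (Ω Ω' : Set ℂ) : Prop :=
  HarmonicMapOn h Ω ∧ ContinuousOn h Ω ∧ Set.BijOn h Ω Ω' ∧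
  ∃ g : ℂ → ℂ, ContinuousOn g Ω' ∧ (∀ z ∈ Ω, g (h z) = z) ∧ (∀ w ∈ Ω', h (g w) = w)

def Annulus (r R : ℝ) : Set ℂ := {z | r < ‖z‖ ∧ ‖z‖ < R}

/-- Wirtinger derivative `∂h/∂z = (h_x - i h_y)/2`. -/
def wirtingerZ (h : ℂ → ℂ) (z : ℂ) : ℂ :=
  (fderiv ℝ h z 1 - Complex.I * fderiv ℝ h z Complex.I) / 2

/-- Wirtinger derivative `∂h/∂z̄ = (h_x + i h_y)/2`. -/
def wirtingerZbar (h : ℂ → ℂ) (z : ℂ) : ℂ :=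
  (fderiv ℝ h z 1 + Complex.I * fderiv ℝ h z Complex.I) / 2

/-- The Teichmüller ring `T(s) = ℂ \ ([-1,0] ∪ [s,∞))`. -/
def Teich (s : ℝ) : Set ℂ := (Complex.ofReal '' (Set.Icc (-1) 0 ∪ Set.Ici s))ᶜ

open Complex Metric Set

/-- Schwarz-type estimate on the vertical strip `{|Re z| < π/(2α)}`. -/
theorem stmt2 (α : ℝ) (hα : 0 < α) (f : ℂ → ℂ)
    (hf : DifferentiableOn ℂ f {z : ℂ | |z.re| < Real.pi / (2 * α)})
    (hb : ∀ z ∈ {z : ℂ | |z.re| < Real.pi / (2 * α)}, ‖f z‖ < 1)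
    (h0 : f 0 = 0) (y : ℝ) :
    ‖f (Complex.I * (y : ℂ))‖ ≤ Real.tanh (α * |y| / 2) := by
  have hπ := Real.pi_pos
  have hkey : ∀ w ∈ ball (0 : ℂ) 1,
      (1 - w * Complex.I) ≠ 0 ∧ 0 < ((1 + w * Complex.I) / (1 - w * Complex.I)).re := by
    intro w hw
    rw [mem_ball_zero_iff] at hw
    have hw' : ‖w‖ < 1 := hw
    have hns : Complex.normSq w < 1 := by
      rw [← Complex.sq_norm]; nlinarith [norm_nonneg w]
    have hbne : (1 - w * Complex.I) ≠ 0 := by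
      intro h
      rw [sub_eq_zero] at h
      have : ‖w * Complex.I‖ = 1 := by rw [← h]; simp
      simp [map_mul] at this
      simp [this] at hw'
    refine ⟨hbne, ?_⟩
    have hbpos : 0 < Complex.normSq (1 - w * Complex.I) := Complex.normSq_pos.2 hbne
    rw [Complex.div_re, ← add_div]
    apply div_pos _ hbpos
    have : (1 + w * Complex.I).re * (1 - w * Complex.I).re +
        (1 + w * Complex.I).im * (1 - w * Complex.I).im = 1 - Complex.normSq w := by
      simp [Complex.normSq_apply]; ring
    nlinarith [this]
  set ψ : ℂ → ℂ := fun w => (2 / (α : ℂ)) * Complex.arctan w with hψdef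
  have hαC : (α : ℂ) ≠ 0 := by exact_mod_cast hα.ne'
  have hψdiff : DifferentiableOn ℂ ψ (ball (0 : ℂ) 1) := by
    intro w hw
    obtain ⟨hbne, hre⟩ := hkey w hw
    have hq : DifferentiableAt ℂ (fun z : ℂ => (1 + z * Complex.I) / (1 - z * Complex.I)) w :=
      DifferentiableAt.div (by fun_prop) (by fun_prop) hbne
    have hlog : DifferentiableAt ℂ
        (fun z : ℂ => Complex.log ((1 + z * Complex.I) / (1 - z * Complex.I))) w :=
      hq.clog (Complex.mem_slitPlane_iff.2 (Or.inl hre))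
    have : DifferentiableAt ℂ ψ w := by
      simp only [hψdef, Complex.arctan]
      exact (differentiableAt_const _).mul ((differentiableAt_const _).mul hlog)
    exact this.differentiableWithinAt
  have hψmaps : MapsTo ψ (ball (0 : ℂ) 1) {z : ℂ | |z.re| < Real.pi / (2 * α)} := by
    intro w hw
    obtain ⟨hbne, hre⟩ := hkey w hw
    set q := (1 + w * Complex.I) / (1 - w * Complex.I) with hq
    have harg : |Complex.arg q| < Real.pi / 2 :=
      Complex.abs_arg_lt_pi_div_two_iff.2 (Or.inl hre)
    have hre_psi : (ψ w).re = (2 / α) * (Complex.arg q / 2) := by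
      simp only [hψdef, Complex.arctan, ← hq]
      have h2 : (2 / (α:ℂ)) = ((2 / α : ℝ) : ℂ) := by push_cast; ring
      rw [h2, Complex.re_ofReal_mul]
      simp [Complex.mul_re, Complex.log_im]
      ring
    show |(ψ w).re| < Real.pi / (2 * α)
    rw [hre_psi, abs_mul, abs_of_pos (by positivity : (0:ℝ) < 2 / α), abs_div,
      abs_of_pos (by norm_num : (0:ℝ) < 2)]
    calc 2 / α * (|Complex.arg q| / 2) = |Complex.arg q| / α := by ring
    _ < (Real.pi / 2) / α := by gcongr
    _ = Real.pi / (2 * α) := by ring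
  -- g = f ∘ ψ satisfies the hypotheses of the Schwarz lemma
  have hψ0 : ψ 0 = 0 := by
    simp [hψdef, Complex.arctan]
  have hgdiff : DifferentiableOn ℂ (f ∘ ψ) (ball (0 : ℂ) 1) := hf.comp hψdiff hψmaps
  have hgmaps : MapsTo (f ∘ ψ) (ball (0 : ℂ) 1) (ball (0 : ℂ) 1) := by
    intro w hw
    rw [mem_ball_zero_iff]
    exact hb _ (hψmaps hw)
  have hg0 : (f ∘ ψ) 0 = 0 := by simp [hψ0, h0]
  -- the point w₀
  set t : ℝ := Real.tanh (α * y / 2) with ht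
  have htanh_lt : |t| < 1 := by
    have hc := Real.cosh_pos (α * y / 2)
    rw [ht, Real.tanh_eq_sinh_div_cosh, abs_div, abs_of_pos hc, div_lt_one hc, abs_lt]
    constructor
    · nlinarith [Real.cosh_add_sinh (α * y / 2), Real.exp_pos (α * y / 2)]
    · nlinarith [Real.cosh_sub_sinh (α * y / 2), Real.exp_pos (-(α * y / 2))]
  set w₀ : ℂ := Complex.I * (t : ℂ) with hw₀
  have habs_w₀ : ‖w₀‖ = |t| := by
    simp [hw₀, Real.norm_eq_abs]
  have hw₀mem : ‖w₀‖ < 1 := by rw [habs_w₀]; exact htanh_lt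
  -- compute ψ w₀ = I y
  have hratio : ((1 : ℝ) - t) / (1 + t) = Real.exp (-(α * y)) := by
    have hc := Real.cosh_pos (α * y / 2)
    have h1 : 1 - t = Real.exp (-(α * y / 2)) / Real.cosh (α * y / 2) := by
      rw [ht, Real.tanh_eq_sinh_div_cosh]
      field_simp
      exact Real.cosh_sub_sinh _
    have h2 : 1 + t = Real.exp (α * y / 2) / Real.cosh (α * y / 2) := by
      rw [ht, Real.tanh_eq_sinh_div_cosh]
      field_simp
      exact Real.cosh_add_sinh _
    rw [h1, h2, div_div_div_cancel_right₀ hc.ne' _ _, ← Real.exp_sub]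
    ring_nf
  have h1t : (0:ℝ) < 1 + t := by cases abs_lt.mp htanh_lt; linarith
  have h1t' : (0:ℝ) < 1 - t := by cases abs_lt.mp htanh_lt; linarith
  have hψw₀ : ψ w₀ = Complex.I * (y : ℂ) := by
    have hwI : w₀ * Complex.I = (-t : ℝ) := by
      rw [hw₀]; push_cast
      linear_combination (t : ℂ) * Complex.I_sq
    have hqval : (1 + w₀ * Complex.I) / (1 - w₀ * Complex.I)
        = ((((1:ℝ) - t) / (1 + t) : ℝ) : ℂ) := by
      rw [hwI]; push_cast; ring
    have hlogq : Complex.log ((1 + w₀ * Complex.I) / (1 - w₀ * Complex.I)) = (-(α * y) : ℝ) := by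
      rw [hqval, hratio, Complex.ofReal_exp,
        Complex.log_exp (by simp; linarith) (by simp [Real.pi_nonneg])]
    show (2 / (α : ℂ)) * Complex.arctan w₀ = Complex.I * (y : ℂ)
    rw [Complex.arctan, hlogq]
    push_cast
    field_simp
  -- Schwarz lemma
  have hS := Complex.norm_le_norm_of_mapsTo_ball hgdiff (hgmaps.mono_right ball_subset_closedBall) hg0 hw₀mem
  rw [Function.comp_apply, hψw₀] at hS
  have habs_t : |t| = Real.tanh (α * |y| / 2) := by
    rcases le_or_gt 0 y with hy | hy
    · rw [_root_.abs_of_nonneg hy, ht, _root_.abs_of_nonneg]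
      rw [Real.tanh_eq_sinh_div_cosh]
      exact div_nonneg (Real.sinh_nonneg_iff.2 (by positivity)) (Real.cosh_pos _).le
    · rw [_root_.abs_of_neg hy, ht]
      have : α * y / 2 = -(α * -y / 2) := by ring
      rw [this, Real.tanh_neg, abs_neg, _root_.abs_of_nonneg]
      rw [Real.tanh_eq_sinh_div_cosh]
      exact div_nonneg (Real.sinh_nonneg_iff.2 (by nlinarith)) (Real.cosh_pos _).le
  calc ‖f (Complex.I * (y : ℂ))‖ ≤ ‖w₀‖ := hS
  _ = Real.tanh (α * |y| / 2) := by rw [habs_w₀, habs_t]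
end
end

section
/- Let R > 1 and let f be a holomorphic function on the annulus A(1/R,R) with |f(z)| < 1 for all z ∈ A(1/R,R), and suppose f(z₀) = 0 for some z₀ with |z₀| = 1. Then |f(z)| ≤ tanh(π²/(4 log R)) for every z with |z| = 1. -/
noncomputable section

private lemma my_tanh_eq (t : ℝ) : Real.tanh t = 1 - 2 / (Real.exp (2*t) + 1) := by
  have h := Real.exp_pos t
  rw [Real.tanh_eq_sinh_div_cosh, Real.sinh_eq, Real.cosh_eq, Real.exp_neg, two_mul,
    Real.exp_add]
  have h2 : Real.exp t * Real.exp t + 1 > 0 := by positivity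
  field_simp
  ring

private lemma my_tanh_lt_one (t : ℝ) : Real.tanh t < 1 := by
  rw [my_tanh_eq]
  have : (0:ℝ) < 2 / (Real.exp (2*t) + 1) := by positivity
  linarith

private lemma my_tanh_mono : Monotone Real.tanh := by
  intro a b hab
  rw [my_tanh_eq, my_tanh_eq]
  have ha := Real.exp_pos (2*a)
  have hb := Real.exp_pos (2*b)
  have : Real.exp (2*a) ≤ Real.exp (2*b) := Real.exp_le_exp.2 (by linarith)
  have h1 : 2 / (Real.exp (2*b) + 1) ≤ 2 / (Real.exp (2*a) + 1) := by
    apply div_le_div_of_nonneg_left (by norm_num) (by linarith) (by linarith)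
  linarith

private lemma my_tanh_abs (t : ℝ) : |Real.tanh t| = Real.tanh |t| := by
  rcases le_total 0 t with ht | ht
  · rw [abs_of_nonneg ht, abs_of_nonneg]
    have := my_tanh_mono ht
    simpa [Real.tanh_zero] using this
  · rw [abs_of_nonpos ht, abs_of_nonpos, Real.tanh_neg]
    have := my_tanh_mono ht
    simpa [Real.tanh_zero] using this

private lemma my_tanh_key (t : ℝ) : 1 + Real.tanh t = Real.exp (2*t) * (1 - Real.tanh t) := by
  rw [my_tanh_eq]
  have h2 : Real.exp (2*t) + 1 > 0 := by positivity
  field_simp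
  ring

/-- Schwarz-type estimate on the unit circle for holomorphic functions on
`A(1/R,R)` vanishing at some point of the unit circle. -/
theorem stmt3 (R : ℝ) (hR : 1 < R) (f : ℂ → ℂ)
    (hf : DifferentiableOn ℂ f (Annulus (1/R) R))
    (hb : ∀ z ∈ Annulus (1/R) R, ‖f z‖ < 1)
    (z₀ : ℂ) (hz₀ : ‖z₀‖ = 1) (hf0 : f z₀ = 0)
    (z : ℂ) (hz : ‖z‖ = 1) :
    ‖f z‖ ≤ Real.tanh (Real.pi ^ 2 / (4 * Real.log R)) := by
  have hR0 : (0:ℝ) < R := lt_trans one_pos hR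
  set h : ℝ := Real.log R with hhdef
  have hh : 0 < h := Real.log_pos hR
  have hexph : Real.exp h = R := Real.exp_log hR0
  have hπ : (0:ℝ) < Real.pi := Real.pi_pos
  have hz₀0 : z₀ ≠ 0 := by
    intro h0; rw [h0] at hz₀; simp at hz₀
  set δ : ℝ := (z / z₀).arg with hδdef
  have hδπ : |δ| ≤ Real.pi := Complex.abs_arg_le_pi _
  have hzz : z = z₀ * Complex.exp (Complex.I * δ) := by
    have habs : ‖z / z₀‖ = 1 := by
      rw [norm_div, hz, hz₀]; norm_num
    have h1 := Complex.norm_mul_exp_arg_mul_I (z / z₀)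
    rw [habs, Complex.ofReal_one, one_mul] at h1
    rw [hδdef, mul_comm Complex.I, h1]
    field_simp
  -- the conformal map from the disk to the strip / annulus
  set ψ : ℂ → ℂ := fun ζ => ((2*h/Real.pi : ℝ) : ℂ) * Complex.log ((1+ζ)/(1-ζ))
    with hψdef
  have hr0 : (0:ℝ) < 2*h/Real.pi := by positivity
  -- basic facts for ζ in the unit ball
  have hne : ∀ ζ : ℂ, ‖ζ‖ < 1 → (1:ℂ) - ζ ≠ 0 := by
    intro ζ hζ hc
    have : ζ = 1 := by linear_combination -hc
    rw [this] at hζ; simp at hζ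
  have hrepos : ∀ ζ : ℂ, ‖ζ‖ < 1 → 0 < ((1+ζ)/(1-ζ)).re := by
    intro ζ hζ
    have hN : 0 < Complex.normSq (1-ζ) := Complex.normSq_pos.2 (hne ζ hζ)
    have habs2 : Complex.normSq ζ < 1 := by
      rw [← Complex.sq_norm]; nlinarith [norm_nonneg ζ]
    rw [Complex.div_re]
    have hnum : (1+ζ).re * (1-ζ).re / Complex.normSq (1-ζ) +
        (1+ζ).im * (1-ζ).im / Complex.normSq (1-ζ)
        = (1 - Complex.normSq ζ) / Complex.normSq (1-ζ) := by
      rw [← add_div]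
      congr 1
      simp [Complex.normSq_apply]
      ring
    rw [hnum]
    exact div_pos (by linarith) hN
  have hslit : ∀ ζ : ℂ, ‖ζ‖ < 1 → (1+ζ)/(1-ζ) ∈ Complex.slitPlane := by
    intro ζ hζ
    exact Complex.mem_slitPlane_iff.2 (Or.inl (hrepos ζ hζ))
  have hψim : ∀ ζ : ℂ, ‖ζ‖ < 1 → |(ψ ζ).im| < h := by
    intro ζ hζ
    have harg : |((1+ζ)/(1-ζ)).arg| < Real.pi / 2 :=
      Complex.abs_arg_lt_pi_div_two_iff.2 (Or.inl (hrepos ζ hζ))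
    have him : (ψ ζ).im = (2*h/Real.pi) * ((1+ζ)/(1-ζ)).arg := by
      simp [hψdef, Complex.mul_im, Complex.log_im]
    rw [him, abs_mul, abs_of_pos hr0]
    calc 2*h/Real.pi * |((1+ζ)/(1-ζ)).arg|
        < 2*h/Real.pi * (Real.pi/2) := by
          exact mul_lt_mul_of_pos_left harg hr0
      _ = h := by field_simp
  -- the map into the annulus
  set Φ : ℂ → ℂ := fun ζ => z₀ * Complex.exp (Complex.I * ψ ζ) with hΦdef
  have hΦabs : ∀ ζ : ℂ, ‖Φ ζ‖ = Real.exp (-(ψ ζ).im) := by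
    intro ζ
    rw [hΦdef]
    simp [norm_mul, hz₀, Complex.norm_exp]
  have hΦmem : ∀ ζ : ℂ, ‖ζ‖ < 1 → Φ ζ ∈ Annulus (1/R) R := by
    intro ζ hζ
    have him := hψim ζ hζ
    rw [abs_lt] at him
    constructor
    · rw [hΦabs]
      have : (1:ℝ)/R = Real.exp (-h) := by
        rw [Real.exp_neg, hexph]; norm_num
      rw [this]
      exact Real.exp_lt_exp.2 (by linarith)
    · rw [hΦabs, ← hexph]
      exact Real.exp_lt_exp.2 (by linarith)
  -- differentiability
  have hψdiff : ∀ ζ ∈ Metric.ball (0:ℂ) 1, DifferentiableAt ℂ ψ ζ := by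
    intro ζ hζ
    rw [Metric.mem_ball, dist_zero_right] at hζ
    have h1 : DifferentiableAt ℂ (fun ζ : ℂ => (1+ζ)/(1-ζ)) ζ :=
      ((differentiableAt_const 1).add differentiableAt_id).div
        ((differentiableAt_const 1).sub differentiableAt_id) (hne ζ hζ)
    exact (differentiableAt_const _).mul (h1.clog (hslit ζ hζ))
  have hΦdiff : ∀ ζ ∈ Metric.ball (0:ℂ) 1, DifferentiableAt ℂ Φ ζ := by
    intro ζ hζ
    exact (differentiableAt_const _).mul
      (((differentiableAt_const Complex.I).mul (hψdiff ζ hζ)).cexp)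
  set F : ℂ → ℂ := fun ζ => f (Φ ζ) with hFdef
  have hFdiff : DifferentiableOn ℂ F (Metric.ball (0:ℂ) 1) := by
    apply hf.comp
    · intro ζ hζ
      exact (hΦdiff ζ hζ).differentiableWithinAt
    · intro ζ hζ
      rw [Metric.mem_ball, dist_zero_right] at hζ
      exact hΦmem ζ hζ
  have hF0 : F 0 = 0 := by
    have : ψ 0 = 0 := by simp [hψdef]
    simp [hFdef, hΦdef, this, hf0]
  have hFmaps : Set.MapsTo F (Metric.ball (0:ℂ) 1) (Metric.ball (0:ℂ) 1) := by
    intro ζ hζ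
    rw [Metric.mem_ball, dist_zero_right] at hζ ⊢
    exact hb _ (hΦmem ζ hζ)
  -- the point ζ' realising z
  set t : ℝ := Real.pi * δ / (4*h) with htdef
  set ζ' : ℂ := ((Real.tanh t : ℝ) : ℂ) with hζ'def
  have hζ'abs : ‖ζ'‖ < 1 := by
    rw [hζ'def, Complex.norm_real, Real.norm_eq_abs, my_tanh_abs]
    exact my_tanh_lt_one _
  -- ψ ζ' = δ
  have hψζ' : ψ ζ' = (δ : ℂ) := by
    have hkey : (1:ℂ) + ζ' = ((Real.exp (2*t) : ℝ) : ℂ) * (1 - ζ') := by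
      rw [hζ'def]
      have := my_tanh_key t
      push_cast
      simpa using congrArg (fun x : ℝ => (x : ℂ)) this
    have h1ζ : (1:ℂ) - ζ' ≠ 0 := hne ζ' hζ'abs
    have hquot : ((1:ℂ)+ζ')/(1-ζ') = ((Real.exp (2*t) : ℝ) : ℂ) := by
      rw [hkey, mul_div_assoc, div_self h1ζ, mul_one]
    have hlog : Complex.log (((Real.exp (2*t) : ℝ) : ℂ)) = ((2*t : ℝ) : ℂ) := by
      rw [← Complex.ofReal_log (Real.exp_pos _).le, Real.log_exp]
    rw [hψdef]
    simp only [hquot, hlog]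
    rw [htdef]
    have hπ' : (Real.pi : ℂ) ≠ 0 := by exact_mod_cast Real.pi_ne_zero
    have hh' : (h : ℂ) ≠ 0 := by exact_mod_cast ne_of_gt hh
    push_cast
    field_simp
    ring
  have hFζ' : F ζ' = f z := by
    rw [hFdef]
    simp only [hΦdef, hψζ']
    rw [← hzz]
  -- Schwarz lemma
  have hS := Complex.norm_le_norm_of_mapsTo_ball hFdiff (hFmaps.mono_right Metric.ball_subset_closedBall) hF0 hζ'abs
  rw [hFζ'] at hS
  refine hS.trans ?_
  rw [hζ'def, Complex.norm_real, Real.norm_eq_abs, my_tanh_abs]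
  apply my_tanh_mono
  rw [htdef, abs_div, abs_mul, abs_of_pos hπ, abs_of_pos (by linarith : (0:ℝ) < 4*h)]
  rw [div_le_div_iff₀ (by linarith) (by positivity)]
  calc Real.pi * |δ| * (4 * h) ≤ Real.pi * Real.pi * (4*h) := by
        have : Real.pi * |δ| ≤ Real.pi * Real.pi := by nlinarith
        nlinarith
    _ = Real.pi ^2 * (4*h) := by ring
end
end

section
/- For all real numbers s, t with 0 < s < t, there exists a harmonic homeomorphism from the Teichmüller ring T(s) onto the Teichmüller ring T(t). -/
noncomputable section

def G (z : ℂ) : ℂ := z * (1 + z⁻¹) ^ (2⁻¹ : ℂ)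

lemma u_sq {z : ℂ} (h1 : (1:ℂ) + z⁻¹ ≠ 0) :
    ((1 + z⁻¹) ^ (2⁻¹ : ℂ)) * ((1 + z⁻¹) ^ (2⁻¹ : ℂ)) = 1 + z⁻¹ := by
  rw [← Complex.cpow_add _ _ h1]
  norm_num

lemma u_ne_zero {z : ℂ} (h1 : (1:ℂ) + z⁻¹ ≠ 0) : ((1 + z⁻¹) ^ (2⁻¹ : ℂ)) ≠ 0 := by
  simp [Complex.cpow_eq_zero_iff, h1]

lemma re_cpow_half_pos {w : ℂ} (hw : w ∈ Complex.slitPlane) : 0 < (w ^ (2⁻¹ : ℂ)).re := by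
  have hw0 : w ≠ 0 := Complex.slitPlane_ne_zero hw
  rw [Complex.cpow_def_of_ne_zero hw0, Complex.exp_re]
  apply mul_pos (Real.exp_pos _)
  apply Real.cos_pos_of_mem_Ioo
  have h1 : (Complex.log w * 2⁻¹).im = w.arg / 2 := by
    simp [Complex.mul_im, Complex.log_im, Complex.log_re]
    ring
  rw [h1]
  constructor
  · have := Complex.neg_pi_lt_arg w
    linarith
  · have h2 : w.arg ≠ Real.pi := by
      intro h
      rcases Complex.arg_eq_pi_iff.1 h with ⟨hre, him⟩
      rcases hw with h | h
      · linarith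
      · exact h him
    have h3 := Complex.arg_le_pi w
    have h4 : w.arg < Real.pi := lt_of_le_of_ne h3 h2
    linarith

lemma G_ne_zero {z : ℂ} (hz : z ≠ 0) (h1 : (1:ℂ) + z⁻¹ ≠ 0) : G z ≠ 0 :=
  mul_ne_zero hz (u_ne_zero h1)

lemma hasDerivAt_G {z : ℂ} (hz : z ≠ 0) (hsp : (1:ℂ) + z⁻¹ ∈ Complex.slitPlane) :
    HasDerivAt G ((z + 2⁻¹) / G z) z := by
  have h1 : (1:ℂ) + z⁻¹ ≠ 0 := Complex.slitPlane_ne_zero hsp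
  have hu := u_ne_zero h1
  have hz' : z * z⁻¹ = 1 := mul_inv_cancel₀ hz
  have hinner : HasDerivAt (fun w : ℂ => 1 + w⁻¹) (-(z^2)⁻¹) z := by
    simpa using ((hasDerivAt_inv hz).const_add 1)
  have hpow : HasDerivAt (fun w : ℂ => (1 + w⁻¹) ^ (2⁻¹ : ℂ))
      ((2⁻¹ : ℂ) * (1 + z⁻¹) ^ ((2⁻¹ : ℂ) - 1) * (-(z^2)⁻¹)) z :=
    hinner.cpow_const hsp
  have hG : HasDerivAt G
      (1 * ((1 + z⁻¹) ^ (2⁻¹ : ℂ)) + z * ((2⁻¹ : ℂ) * (1 + z⁻¹) ^ ((2⁻¹ : ℂ) - 1) * (-(z^2)⁻¹))) z :=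
    (hasDerivAt_id z).mul hpow
  convert hG using 1
  have hexp : ((2⁻¹ : ℂ) - 1) = -(2⁻¹ : ℂ) := by norm_num
  rw [hexp, Complex.cpow_neg]
  have husq := u_sq h1
  set u := (1 + z⁻¹) ^ (2⁻¹ : ℂ) with hu_def
  rw [show G z = z * u from rfl]
  field_simp
  linear_combination (-(2*z)) * husq - 2 * hz'

lemma G_sq {z : ℂ} (hz : z ≠ 0) (h1 : (1:ℂ) + z⁻¹ ≠ 0) : G z * G z = z * z + z := by
  have husq := u_sq h1
  have hz' : z * z⁻¹ = 1 := mul_inv_cancel₀ hz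
  show (z * _) * (z * _) = _
  rw [mul_mul_mul_comm, husq]
  ring_nf
  linear_combination z * hz'

lemma G_sub_bound {z : ℂ} (hz : z ≠ 0) (hsp : (1:ℂ) + z⁻¹ ∈ Complex.slitPlane) :
    ‖G z - z‖ ≤ 1 := by
  have h1 : (1:ℂ) + z⁻¹ ≠ 0 := Complex.slitPlane_ne_zero hsp
  have hru : 0 < ((1 + z⁻¹) ^ (2⁻¹ : ℂ)).re := re_cpow_half_pos hsp
  have hz' : z * z⁻¹ = 1 := mul_inv_cancel₀ hz
  set u := (1 + z⁻¹) ^ (2⁻¹ : ℂ) with hu_def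
  have husq : u * u = 1 + z⁻¹ := u_sq h1
  have hu1 : u + 1 ≠ 0 := by
    intro h
    have h2 : (u + 1).re = 0 := by rw [h]; simp
    simp [Complex.add_re] at h2
    linarith
  have key : G z - z = (u + 1)⁻¹ := by
    rw [show G z = z * u from rfl]
    field_simp
    linear_combination z * husq + hz'
  rw [key, norm_inv]
  have habs : (1:ℝ) ≤ ‖u + 1‖ := by
    calc (1:ℝ) ≤ (u + 1).re := by simp [Complex.add_re]; linarith
      _ ≤ ‖u + 1‖ := Complex.re_le_norm _
  rw [inv_le_one_iff₀]
  right; exact habs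


lemma mem_Teich_iff {s : ℝ} (hs : 0 < s) {z : ℂ} :
    z ∈ Teich s ↔ z.im ≠ 0 ∨ z.re < -1 ∨ (0 < z.re ∧ z.re < s) := by
  have himg : z ∈ Complex.ofReal '' (Set.Icc (-1) 0 ∪ Set.Ici s) ↔
      z.im = 0 ∧ ((-1 ≤ z.re ∧ z.re ≤ 0) ∨ s ≤ z.re) := by
    constructor
    · rintro ⟨x, hx, rfl⟩
      refine ⟨Complex.ofReal_im x, ?_⟩
      simpa [Complex.ofReal_re, Set.mem_Icc, Set.mem_Ici] using hx
    · rintro ⟨him, hre⟩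
      refine ⟨z.re, by simpa [Set.mem_Icc, Set.mem_Ici] using hre, ?_⟩
      apply Complex.ext <;> simp [him]
  unfold Teich
  rw [Set.mem_compl_iff, himg]
  constructor
  · intro h
    by_cases him : z.im = 0
    · refine Or.inr ?_
      have h2 : ¬((-1 ≤ z.re ∧ z.re ≤ 0) ∨ s ≤ z.re) := fun hh => h ⟨him, hh⟩
      push_neg at h2
      obtain ⟨h3, h4⟩ := h2
      rcases lt_or_ge z.re (-1) with h5 | h5
      · exact Or.inl h5
      · exact Or.inr ⟨h3 h5, h4⟩
    · exact Or.inl him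
  · rintro (him | hre | ⟨h1, h2⟩) ⟨him0, hcase⟩
    · exact him him0
    · rcases hcase with ⟨a, b⟩ | c <;> linarith
    · rcases hcase with ⟨a, b⟩ | c <;> linarith

lemma isOpen_Teich (s : ℝ) : IsOpen (Teich s) := by
  have hcl : IsClosed (Set.Icc (-1:ℝ) 0 ∪ Set.Ici s) := isClosed_Icc.union isClosed_Ici
  exact (Complex.isometry_ofReal.isClosedEmbedding.isClosedMap _ hcl).isOpen_compl

lemma Teich_subset_dom {s : ℝ} (hs : 0 < s) {z : ℂ} (hz : z ∈ Teich s) :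
    z ≠ 0 ∧ (1:ℂ) + z⁻¹ ∈ Complex.slitPlane := by
  rw [mem_Teich_iff hs] at hz
  have hz0 : z ≠ 0 := by
    rintro rfl
    rcases hz with h | h | ⟨h1, h2⟩
    · simp at h
    · norm_num at h
    · norm_num at h1
  refine ⟨hz0, ?_⟩
  rw [Complex.mem_slitPlane_iff]
  by_cases him : z.im = 0
  · left
    have hzre : z = (z.re : ℂ) := by apply Complex.ext <;> simp [him]
    have key : ∀ x : ℝ, x < -1 ∨ 0 < x → (0:ℝ) < 1 + x⁻¹ := by
      rintro x (hx | hx)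
      · have hxne : x ≠ 0 := by linarith
        have hinv : x * x⁻¹ = 1 := mul_inv_cancel₀ hxne
        nlinarith [hinv]
      · have : 0 < x⁻¹ := inv_pos.mpr hx
        linarith
    have hx : z.re < -1 ∨ 0 < z.re := by
      rcases hz with h | h | ⟨h1, h2⟩
      · exact absurd him h
      · exact Or.inl h
      · exact Or.inr h1
    have hpos := key z.re hx
    rw [hzre]
    rw [← Complex.ofReal_inv, ← Complex.ofReal_one, ← Complex.ofReal_add]
    simpa using hpos
  · right
    rw [Complex.add_im, Complex.inv_im]
    simp only [Complex.one_im, zero_add]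
    have hnsq : Complex.normSq z ≠ 0 := by
      simpa [Complex.normSq_eq_zero] using hz0
    intro hcon
    apply him
    field_simp at hcon
    simpa using hcon

lemma dom_of_im_ne {z : ℂ} (him : z.im ≠ 0) :
    z ≠ 0 ∧ (1:ℂ) + z⁻¹ ∈ Complex.slitPlane := by
  have hz0 : z ≠ 0 := by intro h; rw [h] at him; simp at him
  refine ⟨hz0, ?_⟩
  rw [Complex.mem_slitPlane_iff]
  right
  rw [Complex.add_im, Complex.inv_im]
  simp only [Complex.one_im, zero_add]
  have hnsq : Complex.normSq z ≠ 0 := by simpa [Complex.normSq_eq_zero] using hz0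
  intro hcon
  apply him
  field_simp at hcon
  simpa using hcon

lemma im_G_ne_of_im_ne {z : ℂ} (him : z.im ≠ 0) : (G z).im ≠ 0 := by
  obtain ⟨hz0, hsp⟩ := dom_of_im_ne him
  have h1 : (1:ℂ) + z⁻¹ ≠ 0 := Complex.slitPlane_ne_zero hsp
  intro hq
  have hsq := G_sq hz0 h1
  have hre : (G z).re * (G z).re = (z * z + z).re := by
    rw [← hsq, Complex.mul_re, hq]; ring
  have him2 : (z * z + z).im = 0 := by rw [← hsq, Complex.mul_im, hq]; ring
  have him3 : (z * z + z).im = z.im * (2 * z.re + 1) := by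
    simp [Complex.add_im, Complex.mul_im]; ring
  have hx : z.re = -(1/2) := by
    rw [him3] at him2
    rcases mul_eq_zero.1 him2 with h | h
    · exact absurd h him
    · linarith
  have hre2 : (z * z + z).re = z.re * z.re - z.im * z.im + z.re := by
    simp [Complex.add_re, Complex.mul_re]
  nlinarith [mul_self_nonneg (G z).re, mul_self_nonneg z.im, mul_self_pos.mpr him]

lemma continuousOn_G_half (c : Bool) :
    ContinuousOn G {z : ℂ | if c then 0 < z.im else z.im < 0} := by
  intro z hz
  have him : z.im ≠ 0 := by
    simp only [Set.mem_setOf_eq] at hz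
    cases c <;> simp_all <;> linarith
  obtain ⟨hz0, hsp⟩ := dom_of_im_ne him
  exact ((hasDerivAt_G hz0 hsp).continuousAt).continuousWithinAt

lemma im_G_pos {z : ℂ} (him : 0 < z.im) : 0 < (G z).im := by
  have hconn : IsPreconnected {w : ℂ | 0 < w.im} := (convex_halfSpace_im_gt 0).isPreconnected
  have hGI : (G Complex.I).im = ((1 - Complex.I) ^ (2⁻¹ : ℂ)).re := by
    have heq : (1:ℂ) + Complex.I⁻¹ = 1 - Complex.I := by rw [Complex.inv_I]; ring
    simp only [G, heq]
    simp [Complex.mul_im]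
  have hGIpos : 0 < (G Complex.I).im := by
    rw [hGI]
    exact re_cpow_half_pos (by rw [Complex.mem_slitPlane_iff]; left; simp)
  by_contra hng
  push_neg at hng
  have hneg : (G z).im < 0 := lt_of_le_of_ne hng (im_G_ne_of_im_ne (ne_of_gt him))
  have hcont : ContinuousOn (fun w => (G w).im) {w : ℂ | 0 < w.im} := by
    have := continuousOn_G_half true
    simp only [if_true] at this
    exact Complex.continuous_im.comp_continuousOn this
  have hsub := hconn.intermediate_value (a := z) (b := Complex.I)
    (by simpa using him) (by simp) hcont
  have h0 : (0:ℝ) ∈ Set.Icc ((G z).im) ((G Complex.I).im) := ⟨le_of_lt hneg, le_of_lt hGIpos⟩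
  obtain ⟨w, hw, hw0⟩ := hsub h0
  exact im_G_ne_of_im_ne (ne_of_gt (by simpa using hw)) hw0

lemma im_G_neg {z : ℂ} (him : z.im < 0) : (G z).im < 0 := by
  have hconn : IsPreconnected {w : ℂ | w.im < 0} := (convex_halfSpace_im_lt 0).isPreconnected
  have hGI : (G (-Complex.I)).im = -(((1 + Complex.I) ^ (2⁻¹ : ℂ)).re) := by
    have heq : (1:ℂ) + (-Complex.I)⁻¹ = 1 + Complex.I := by rw [inv_neg, Complex.inv_I]; ring
    simp only [G, heq]
    simp [Complex.mul_im]
  have hGIneg : (G (-Complex.I)).im < 0 := by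
    rw [hGI, neg_lt, neg_zero]
    exact re_cpow_half_pos (by rw [Complex.mem_slitPlane_iff]; left; simp)
  by_contra hng
  push_neg at hng
  have hpos : 0 < (G z).im :=
    lt_of_le_of_ne hng (Ne.symm (im_G_ne_of_im_ne (ne_of_lt him)))
  have hcont : ContinuousOn (fun w => (G w).im) {w : ℂ | w.im < 0} := by
    have := continuousOn_G_half false
    simp only [Bool.false_eq_true, if_false] at this
    exact Complex.continuous_im.comp_continuousOn this
  have hsub := hconn.intermediate_value (a := -Complex.I) (b := z)
    (by simp) (by simpa using him) hcont
  have h0 : (0:ℝ) ∈ Set.Icc ((G (-Complex.I)).im) ((G z).im) := ⟨le_of_lt hGIneg, le_of_lt hpos⟩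
  obtain ⟨w, hw, hw0⟩ := hsub h0
  exact im_G_ne_of_im_ne (ne_of_lt (by simpa using hw)) hw0

lemma one_add_inv_nonneg {x : ℝ} (hx : x < -1 ∨ 0 < x) : 0 < 1 + x⁻¹ := by
  rcases hx with hx | hx
  · have hxne : x ≠ 0 := by linarith
    have hinv : x * x⁻¹ = 1 := mul_inv_cancel₀ hxne
    nlinarith [hinv]
  · have : 0 < x⁻¹ := inv_pos.mpr hx
    linarith

lemma G_ofReal {x : ℝ} (hx : x < -1 ∨ 0 < x) :
    G (x : ℂ) = (if 0 < x then 1 else -1) * ((Real.sqrt (x^2+x) : ℝ) : ℂ) := by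
  have hpos := one_add_inv_nonneg hx
  have hxne : x ≠ 0 := by rcases hx with h | h <;> intro hc <;> rw [hc] at h <;> linarith
  have hcast : (1:ℂ) + (x:ℂ)⁻¹ = ((1 + x⁻¹ : ℝ) : ℂ) := by push_cast; ring
  have hcpow : ((1:ℂ) + (x:ℂ)⁻¹) ^ (2⁻¹:ℂ) = (((1 + x⁻¹) ^ (2⁻¹:ℝ) : ℝ) : ℂ) := by
    rw [hcast, show (2⁻¹:ℂ) = ((2⁻¹:ℝ):ℂ) by norm_num, ← Complex.ofReal_cpow hpos.le]
  have hrpow : (1 + x⁻¹) ^ (2⁻¹:ℝ) = Real.sqrt (1 + x⁻¹) := by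
    rw [Real.sqrt_eq_rpow]; norm_num
  have hmain : x * Real.sqrt (1 + x⁻¹) = (if 0 < x then 1 else -1) * Real.sqrt (x^2+x) := by
    have hsq : x^2 * (1 + x⁻¹) = x^2 + x := by field_simp
    have h2 : Real.sqrt (x^2+x) = Real.sqrt (x^2) * Real.sqrt (1+x⁻¹) := by
      rw [← Real.sqrt_mul (sq_nonneg x), hsq]
    rcases hx with hneg | hposx
    · rw [if_neg (by linarith)]
      have h3 : Real.sqrt (x^2) = -x := by
        rw [Real.sqrt_sq_eq_abs, abs_of_neg (by linarith)]
      rw [h2, h3]; ring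
    · rw [if_pos hposx]
      have h3 : Real.sqrt (x^2) = x := by
        rw [Real.sqrt_sq_eq_abs, abs_of_pos hposx]
      rw [h2, h3]; ring
  show (x:ℂ) * _ = _
  rw [hcpow, hrpow]
  rcases hx with h | h
  · rw [if_neg (by linarith : ¬ 0 < x)] at hmain ⊢
    rw [show ((x:ℂ) * (Real.sqrt (1+x⁻¹) : ℝ)) = (((x * Real.sqrt (1+x⁻¹) : ℝ)) : ℂ) by push_cast; ring]
    rw [hmain]; push_cast; ring
  · rw [if_pos h] at hmain ⊢
    rw [show ((x:ℂ) * (Real.sqrt (1+x⁻¹) : ℝ)) = (((x * Real.sqrt (1+x⁻¹) : ℝ)) : ℂ) by push_cast; ring]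
    rw [hmain]; push_cast; ring

lemma re_Gderiv_pos {s : ℝ} (hs : 0 < s) {z : ℂ} (hz : z ∈ Teich s) :
    0 < ((z + 2⁻¹) / G z).re := by
  obtain ⟨hz0, hsp⟩ := Teich_subset_dom hs hz
  have h1 : (1:ℂ) + z⁻¹ ≠ 0 := Complex.slitPlane_ne_zero hsp
  have hGne : G z ≠ 0 := G_ne_zero hz0 h1
  by_cases him : z.im = 0
  · -- real case
    have hzre : z = (z.re : ℂ) := by apply Complex.ext <;> simp [him]
    have hx : z.re < -1 ∨ (0 < z.re ∧ z.re < s) := by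
      rcases (mem_Teich_iff hs).1 hz with h | h | h
      · exact absurd him h
      · exact Or.inl h
      · exact Or.inr h
    set x := z.re with hxdef
    have hx' : x < -1 ∨ 0 < x := by rcases hx with h | ⟨h, _⟩; exacts [Or.inl h, Or.inr h]
    have hG := G_ofReal hx'
    have hr : 0 < Real.sqrt (x^2+x) := by
      apply Real.sqrt_pos.2
      rcases hx' with h | h <;> nlinarith
    have hza : z + 2⁻¹ = ((x + 2⁻¹ : ℝ) : ℂ) := by rw [hzre]; push_cast; ring
    rcases hx' with h | h
    · rw [hza, hzre, hG, if_neg (by linarith : ¬ 0 < x)]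
      rw [show ((x + 2⁻¹ : ℝ) : ℂ) / ((-1) * ((Real.sqrt (x^2+x) : ℝ) : ℂ))
          = (((x + 2⁻¹) / (-Real.sqrt (x^2+x)) : ℝ) : ℂ) by push_cast; ring]
      rw [Complex.ofReal_re, div_neg]
      have hlt : (x+2⁻¹)/Real.sqrt (x^2+x) < 0 := div_neg_of_neg_of_pos (by linarith) hr
      linarith
    · rw [hza, hzre, hG, if_pos h]
      rw [one_mul, ← Complex.ofReal_div, Complex.ofReal_re]
      exact div_pos (by linarith) hr
  · -- complex case
    set p := (G z).re
    set q := (G z).im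
    set a := z.re + 2⁻¹
    set b := z.im
    have hb : b ≠ 0 := him
    have hqb : 0 < q * b := by
      rcases lt_or_gt_of_ne hb with h | h
      · have := im_G_neg h
        exact mul_pos_of_neg_of_neg this h
      · exact mul_pos (im_G_pos h) h
    have hsq := G_sq hz0 h1
    have hpq : p * q = a * b := by
      have h2 : (G z * G z).im = (z * z + z).im := by rw [hsq]
      have h3 : (G z * G z).im = 2 * (p * q) := by rw [Complex.mul_im]; ring
      have h4 : (z * z + z).im = 2 * (a * b) := by
        simp only [Complex.add_im, Complex.mul_im]
        show z.re * z.im + z.im * z.re + z.im = 2 * ((z.re + 2⁻¹) * z.im)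
        ring
      rw [h3, h4] at h2
      linarith
    have hdivre : ((z + 2⁻¹) / G z).re
        = (a * p + b * q) / Complex.normSq (G z) := by
      rw [Complex.div_re]
      have h5 : (z + 2⁻¹).re = a := by simp [Complex.add_re]; rfl
      have h6 : (z + 2⁻¹).im = b := by simp [Complex.add_im]; rfl
      rw [h5, h6]
      ring
    rw [hdivre]
    apply div_pos
    · have hb2 : 0 < b * b := mul_self_pos.2 hb
      have hkey : (a*p + b*q)*(b*b) = (q*b)*(p*p + b*b) := by linear_combination (-(p*b)) * hpq
      have hp2 : 0 < p*p + b*b := by nlinarith [mul_self_nonneg p]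
      nlinarith [mul_pos hqb hp2, hkey, hb2]
    · exact Complex.normSq_pos.2 hGne

/-- derivative of `re ∘ g` for a complex-differentiable `g`. -/
lemma hasFDerivAt_re_comp {g : ℂ → ℂ} {g' z : ℂ} (hg : HasDerivAt g g' z) :
    HasFDerivAt (fun w => (g w).re)
      (Complex.reCLM.comp (((ContinuousLinearMap.id ℂ ℂ).smulRight g').restrictScalars ℝ)) z := by
  have h1 : HasFDerivAt g ((ContinuousLinearMap.id ℂ ℂ).smulRight g') z := by
    exact hasDerivAt_iff_hasFDerivAt.mp hg
  have h2 := h1.restrictScalars ℝ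
  exact (Complex.reCLM.hasFDerivAt).comp z h2

lemma re_comp_CLM_apply (g' v : ℂ) :
    (Complex.reCLM.comp (((ContinuousLinearMap.id ℂ ℂ).smulRight g').restrictScalars ℝ)) v
      = (v * g').re := by
  simp [ContinuousLinearMap.smulRight_apply, smul_eq_mul]

lemma harmonicOnReal_re_of_holo {f : ℂ → ℂ} {Ω : Set ℂ} (hΩ : IsOpen Ω)
    (hf : DifferentiableOn ℂ f Ω) : HarmonicOnReal (fun z => (f z).re) Ω := by
  have hfa : AnalyticOnNhd ℂ f Ω := hf.analyticOnNhd hΩ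
  have hfa' : AnalyticOnNhd ℂ (deriv f) Ω := hfa.deriv
  constructor
  · have h1 : ContDiffOn ℂ 2 f Ω := hfa.contDiffOn hΩ.uniqueDiffOn
    exact Complex.reCLM.contDiff.comp_contDiffOn (h1.restrict_scalars ℝ)
  · intro z hz
    have hmem : Ω ∈ nhds z := hΩ.mem_nhds hz
    -- first directional derivative functions agree with explicit formulas near z
    have hE1 : (fun w => fderiv ℝ (fun w => (f w).re) w 1) =ᶠ[nhds z] (fun w => (deriv f w).re) := by
      filter_upwards [hmem] with w hw
      rw [(hasFDerivAt_re_comp ((hfa w hw).differentiableAt.hasDerivAt)).fderiv]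
      rw [re_comp_CLM_apply]
      simp
    have hEI : (fun w => fderiv ℝ (fun w => (f w).re) w Complex.I) =ᶠ[nhds z]
        (fun w => ((deriv f w) * Complex.I).re) := by
      filter_upwards [hmem] with w hw
      rw [(hasFDerivAt_re_comp ((hfa w hw).differentiableAt.hasDerivAt)).fderiv]
      rw [re_comp_CLM_apply]
      rw [mul_comm]
    have hd2 : HasDerivAt (deriv f) (deriv (deriv f) z) z :=
      ((hfa' z hz).differentiableAt).hasDerivAt
    have hF1 : fderiv ℝ (fun w => fderiv ℝ (fun w => (f w).re) w 1) z 1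
        = (deriv (deriv f) z).re := by
      rw [hE1.fderiv_eq]
      rw [(hasFDerivAt_re_comp hd2).fderiv]
      rw [re_comp_CLM_apply]
      simp
    have hFI : fderiv ℝ (fun w => fderiv ℝ (fun w => (f w).re) w Complex.I) z Complex.I
        = ((deriv (deriv f) z) * Complex.I * Complex.I).re := by
      rw [hEI.fderiv_eq]
      have hgI : HasDerivAt (fun w => deriv f w * Complex.I)
          ((deriv (deriv f) z) * Complex.I) z := hd2.mul_const _
      rw [(hasFDerivAt_re_comp hgI).fderiv]
      rw [re_comp_CLM_apply]
      ring_nf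
    rw [hF1, hFI]
    simp [Complex.mul_re]

def hmap (c : ℝ) : ℂ → ℂ := fun z => z + ((2*c*(G z).re : ℝ) : ℂ)

lemma hmap_im (c : ℝ) (z : ℂ) : (hmap c z).im = z.im := by simp [hmap]
lemma hmap_re (c : ℝ) (z : ℂ) : (hmap c z).re = z.re + 2*c*(G z).re := by simp [hmap]

def Mclm (c : ℝ) (g' : ℂ) : ℂ →L[ℝ] ℂ :=
  ContinuousLinearMap.id ℝ ℂ +
  Complex.ofRealCLM.comp ((2*c) •
    (Complex.reCLM.comp (((ContinuousLinearMap.id ℂ ℂ).smulRight g').restrictScalars ℝ)))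

lemma Mclm_apply (c : ℝ) (g' v : ℂ) :
    Mclm c g' v = v + ((2*c*(v.re * g'.re - v.im * g'.im) : ℝ) : ℂ) := by
  simp [Mclm, ContinuousLinearMap.smulRight_apply, smul_eq_mul, Complex.mul_re]

def Nclm (c : ℝ) (g' : ℂ) : ℂ →L[ℝ] ℂ :=
  Complex.ofRealCLM.comp ((1 + 2*c*g'.re)⁻¹ •
    (Complex.reCLM + (2*c*g'.im) • Complex.imCLM)) + Complex.imCLM.smulRight Complex.I

lemma Nclm_apply (c : ℝ) (g' w : ℂ) :
    Nclm c g' w = (((1 + 2*c*g'.re)⁻¹ * (w.re + 2*c*g'.im * w.im) : ℝ) : ℂ) + w.im • Complex.I := by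
  simp [Nclm, ContinuousLinearMap.smulRight_apply, smul_eq_mul]
  ring_nf

def Eequiv (c : ℝ) (g' : ℂ) (hd : (1 + 2*c*g'.re) ≠ 0) : ℂ ≃L[ℝ] ℂ :=
  ContinuousLinearEquiv.equivOfInverse (Mclm c g') (Nclm c g')
    (by
      intro v
      have hd' : 1 + c*g'.re*2 ≠ 0 := by intro h; exact hd (by linarith)
      rw [Mclm_apply, Nclm_apply]
      apply Complex.ext
      · simp [Complex.add_re, Complex.add_im, Complex.smul_re, Complex.smul_im]
        rw [show ((1:ℂ) + 2 * ↑c * ↑g'.re) = (((1 + 2*c*g'.re : ℝ)) : ℂ) by push_cast; ring,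
          Complex.normSq_ofReal]
        field_simp
        ring
      · simp [Complex.add_re, Complex.add_im, Complex.smul_re, Complex.smul_im])
    (by
      intro w
      have hd' : 1 + c*g'.re*2 ≠ 0 := by intro h; exact hd (by linarith)
      rw [Nclm_apply, Mclm_apply]
      apply Complex.ext
      · simp [Complex.add_re, Complex.add_im, Complex.smul_re, Complex.smul_im]
        rw [show ((1:ℂ) + 2 * ↑c * ↑g'.re) = (((1 + 2*c*g'.re : ℝ)) : ℂ) by push_cast; ring,
          Complex.normSq_ofReal]
        field_simp
        ring
      · simp [Complex.add_re, Complex.add_im, Complex.smul_re, Complex.smul_im])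

lemma Eequiv_coe (c : ℝ) (g' : ℂ) (hd : (1 + 2*c*g'.re) ≠ 0) :
    (Eequiv c g' hd : ℂ →L[ℝ] ℂ) = Mclm c g' := rfl

lemma hasFDerivAt_re_comp' {g : ℂ → ℂ} {g' z : ℂ} (hg : HasDerivAt g g' z) :
    HasFDerivAt (fun w => (g w).re)
      (Complex.reCLM.comp (((ContinuousLinearMap.id ℂ ℂ).smulRight g').restrictScalars ℝ)) z :=
  (Complex.reCLM.hasFDerivAt).comp z ((hasDerivAt_iff_hasFDerivAt.mp hg).restrictScalars ℝ)

lemma hasFDerivAt_hmap (c : ℝ) {z : ℂ} (hz0 : z ≠ 0) (hsp : (1:ℂ) + z⁻¹ ∈ Complex.slitPlane) :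
    HasFDerivAt (hmap c) (Mclm c ((z + 2⁻¹) / G z)) z := by
  set g' := (z + 2⁻¹) / G z
  have h2 := hasFDerivAt_re_comp' (hasDerivAt_G hz0 hsp)
  have h3 : HasFDerivAt (fun w => (2*c) • (G w).re)
      ((2*c) • (Complex.reCLM.comp (((ContinuousLinearMap.id ℂ ℂ).smulRight g').restrictScalars ℝ))) z :=
    h2.const_smul (2*c)
  have h4 := Complex.ofRealCLM.hasFDerivAt.comp z h3
  have h5 := (hasFDerivAt_id z).add h4
  exact h5

def DomG : Set ℂ := {w : ℂ | w ≠ 0} ∩ (fun w : ℂ => 1 + w⁻¹) ⁻¹' Complex.slitPlane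

lemma isOpen_DomG : IsOpen DomG := by
  apply ContinuousOn.isOpen_inter_preimage (f := fun w : ℂ => 1 + w⁻¹)
  · intro w hw
    exact (continuousAt_const.add (continuousAt_inv₀ hw)).continuousWithinAt
  · exact isOpen_ne
  · exact Complex.isOpen_slitPlane

lemma contDiffAt_G {z : ℂ} (hz0 : z ≠ 0) (hsp : (1:ℂ) + z⁻¹ ∈ Complex.slitPlane) :
    ContDiffAt ℝ 2 G z := by
  have hdom : z ∈ DomG := ⟨hz0, hsp⟩
  have hdiff : DifferentiableOn ℂ G DomG := fun w hw =>
    (hasDerivAt_G hw.1 hw.2).differentiableAt.differentiableWithinAt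
  have hana : AnalyticOnNhd ℂ G DomG := hdiff.analyticOnNhd isOpen_DomG
  have hcd : ContDiffOn ℂ 2 G DomG := hana.contDiffOn isOpen_DomG.uniqueDiffOn
  exact ((hcd.restrict_scalars ℝ).contDiffAt (isOpen_DomG.mem_nhds hdom))

lemma contDiffAt_hmap (c : ℝ) {z : ℂ} (hz0 : z ≠ 0) (hsp : (1:ℂ) + z⁻¹ ∈ Complex.slitPlane) :
    ContDiffAt ℝ 2 (hmap c) z := by
  have hGc := contDiffAt_G hz0 hsp
  have hre : ContDiffAt ℝ 2 (fun w => (G w).re) z :=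
    Complex.reCLM.contDiff.contDiffAt.comp z hGc
  have hmul : ContDiffAt ℝ 2 (fun w => 2*c*(G w).re) z := contDiffAt_const.mul hre
  have hcast : ContDiffAt ℝ 2 (fun w => ((2*c*(G w).re : ℝ) : ℂ)) z :=
    Complex.ofRealCLM.contDiff.contDiffAt.comp z hmul
  exact contDiffAt_id.add hcast

lemma map_nhds_hmap (c : ℝ) {z : ℂ} (hz0 : z ≠ 0) (hsp : (1:ℂ) + z⁻¹ ∈ Complex.slitPlane)
    (hd : (1 + 2*c*(((z + 2⁻¹) / G z)).re) ≠ 0) :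
    Filter.map (hmap c) (nhds z) = nhds (hmap c z) := by
  have hstrict : HasStrictFDerivAt (hmap c) (fderiv ℝ (hmap c) z) z :=
    (contDiffAt_hmap c hz0 hsp).hasStrictFDerivAt (by norm_num)
  rw [(hasFDerivAt_hmap c hz0 hsp).fderiv] at hstrict
  rw [← Eequiv_coe c _ hd] at hstrict
  exact hstrict.map_nhds_eq_of_equiv


lemma hasDerivAt_creal {f : ℝ → ℂ} {f' : ℂ} {x : ℝ} (h : HasDerivAt f f' x) :
    HasDerivAt (fun x => (f x).re) f'.re x := by
  have h2 := Complex.reCLM.hasFDerivAt.comp_hasDerivAt x h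
  exact h2

/-- Case 1 of Theorem 3: for `0 < s < t` there is a harmonic homeomorphism
from the Teichmüller ring `T(s)` onto `T(t)`. -/
theorem stmt8 (s t : ℝ) (hs : 0 < s) (hst : s < t) :
    ∃ h : ℂ → ℂ, IsHarmonicHomeoOn h (Teich s) (Teich t) := by
  have ht : 0 < t := lt_trans hs hst
  set c : ℝ := (t - s) / (2 * Real.sqrt (s^2+s)) with hc_def
  have hsq_pos : 0 < Real.sqrt (s^2+s) := Real.sqrt_pos.2 (by nlinarith)
  have hc : 0 < c := div_pos (by linarith) (by linarith)
  have hkey : s + 2*c*Real.sqrt (s^2+s) = t := by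
    rw [hc_def]; field_simp; ring
  -- basic facts
  have hdomS : ∀ z ∈ Teich s, z ≠ 0 ∧ (1:ℂ) + z⁻¹ ∈ Complex.slitPlane := fun z hz =>
    Teich_subset_dom hs hz
  have hGd : ∀ z ∈ Teich s, 0 < ((z + 2⁻¹)/G z).re := fun z hz => re_Gderiv_pos hs hz
  -- the line sections for y ≠ 0
  have hsec : ∀ y : ℝ, y ≠ 0 → ∀ x : ℝ,
      HasDerivAt (fun x : ℝ => x + 2*c*(G (↑x + ↑y * Complex.I)).re)
        (1 + 2*c*(((↑x + ↑y * Complex.I + 2⁻¹)/G (↑x + ↑y * Complex.I)).re)) x := by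
    intro y hy x
    set z : ℂ := ↑x + ↑y * Complex.I with hz_def
    have him : z.im = y := by simp [hz_def]
    obtain ⟨hz0, hsp⟩ := dom_of_im_ne (him ▸ hy)
    have hG := hasDerivAt_G hz0 hsp
    have hinner : HasDerivAt (fun w : ℂ => w + ↑y * Complex.I) 1 ↑x :=
      (hasDerivAt_id (↑x : ℂ)).add_const (↑y * Complex.I)
    have hcomp : HasDerivAt (fun w : ℂ => G (w + ↑y * Complex.I)) ((z + 2⁻¹)/G z * 1) ↑x :=
      by have := hG.comp (↑x : ℂ) hinner; exact this
    have hcomp2 : HasDerivAt (fun x : ℝ => G (↑x + ↑y * Complex.I)) ((z + 2⁻¹)/G z) x := by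
      simpa using hcomp.comp_ofReal
    have hre := hasDerivAt_creal hcomp2
    have := (hasDerivAt_id x).add (hre.const_mul (2*c))
    exact this
  have hmemline : ∀ (y : ℝ), y ≠ 0 → ∀ x : ℝ, (↑x + ↑y * Complex.I) ∈ Teich s := by
    intro y hy x
    rw [mem_Teich_iff hs]
    left
    simpa using hy
  have hmono : ∀ y : ℝ, y ≠ 0 → StrictMono (fun x : ℝ => x + 2*c*(G (↑x + ↑y * Complex.I)).re) := by
    intro y hy
    apply strictMono_of_hasDerivAt_pos (hsec y hy)
    intro x
    have h1 := hGd _ (hmemline y hy x)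
    nlinarith [h1, hc]
  -- bound for surjectivity
  have hbound : ∀ z : ℂ, z ≠ 0 → (1:ℂ) + z⁻¹ ∈ Complex.slitPlane → |(G z).re - z.re| ≤ 1 := by
    intro z h0 h1
    have h2 := G_sub_bound h0 h1
    calc |(G z).re - z.re| = |(G z - z).re| := by rw [Complex.sub_re]
      _ ≤ ‖G z - z‖ := Complex.abs_re_le_norm _
      _ ≤ 1 := h2
  have hsurjline : ∀ y : ℝ, y ≠ 0 → ∀ X : ℝ,
      ∃ x : ℝ, x + 2*c*(G (↑x + ↑y * Complex.I)).re = X := by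
    intro y hy X
    set f : ℝ → ℝ := fun x => x + 2*c*(G (↑x + ↑y * Complex.I)).re with hf_def
    have hfc : Continuous f := by
      apply continuous_iff_continuousAt.2
      intro x
      exact (hsec y hy x).continuousAt
    set A : ℝ := (X - 2*c)/(1+2*c) - 1 with hA_def
    set B : ℝ := (X + 2*c)/(1+2*c) + 1 with hB_def
    have hd1 : (0:ℝ) < 1 + 2*c := by linarith
    have hAB : A ≤ B := by
      rw [hA_def, hB_def]
      have h5 : (X - 2*c)/(1+2*c) ≤ (X + 2*c)/(1+2*c) := by
        rw [div_le_div_iff₀ hd1 hd1]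
        nlinarith [hc]
      linarith
    have hbd : ∀ x : ℝ, |(G (↑x + ↑y * Complex.I)).re - x| ≤ 1 := by
      intro x
      obtain ⟨hz0, hsp⟩ := dom_of_im_ne (z := ↑x + ↑y * Complex.I) (by simpa using hy)
      have := hbound _ hz0 hsp
      simpa using this
    have hfA : f A ≤ X := by
      have h3 := abs_le.1 (hbd A)
      have h4 : (1+2*c) * A = X - 2*c - (1+2*c) := by
        rw [hA_def]; field_simp
      have h6 : 2*c*((G (↑A + ↑y * Complex.I)).re - A) ≤ 2*c*1 :=
        mul_le_mul_of_nonneg_left h3.2 (by linarith)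
      show A + 2*c*(G (↑A + ↑y * Complex.I)).re ≤ X
      nlinarith [h6]
    have hfB : X ≤ f B := by
      have h3 := abs_le.1 (hbd B)
      have h4 : (1+2*c) * B = X + 2*c + (1+2*c) := by
        rw [hB_def]; field_simp
      have h6 : 2*c*(-1) ≤ 2*c*((G (↑B + ↑y * Complex.I)).re - B) :=
        mul_le_mul_of_nonneg_left h3.1 (by linarith)
      show X ≤ B + 2*c*(G (↑B + ↑y * Complex.I)).re
      nlinarith [h6]
    obtain ⟨x, _, hx⟩ := intermediate_value_Icc hAB hfc.continuousOn ⟨hfA, hfB⟩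
    exact ⟨x, hx⟩
  -- real sections
  set φp : ℝ → ℝ := fun x => x + 2*c*Real.sqrt (x^2+x) with hφp_def
  set φm : ℝ → ℝ := fun x => x - 2*c*Real.sqrt (x^2+x) with hφm_def
  have hφp_cont : Continuous φp := by
    apply continuous_id.add
    exact continuous_const.mul (Real.continuous_sqrt.comp (by continuity))
  have hφm_cont : Continuous φm := by
    apply continuous_id.sub
    exact continuous_const.mul (Real.continuous_sqrt.comp (by continuity))
  have hφp_mono : StrictMonoOn φp (Set.Ici 0) := by
    intro a ha b hb hab
    simp only [Set.mem_Ici] at ha hb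
    have h1 : Real.sqrt (a^2+a) ≤ Real.sqrt (b^2+b) := Real.sqrt_le_sqrt (by nlinarith)
    have : 2*c*Real.sqrt (a^2+a) ≤ 2*c*Real.sqrt (b^2+b) := by nlinarith
    simp only [hφp_def]
    linarith
  have hφm_mono : StrictMonoOn φm (Set.Iic (-1)) := by
    intro a ha b hb hab
    simp only [Set.mem_Iic] at ha hb
    have h1 : Real.sqrt (b^2+b) ≤ Real.sqrt (a^2+a) := Real.sqrt_le_sqrt (by nlinarith)
    have : 2*c*Real.sqrt (b^2+b) ≤ 2*c*Real.sqrt (a^2+a) := by nlinarith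
    simp only [hφm_def]
    linarith
  have hφp0 : φp 0 = 0 := by simp [hφp_def]
  have hφps : φp s = t := by
    simp only [hφp_def]
    exact hkey
  have hφm1 : φm (-1) = -1 := by
    simp only [hφm_def]
    norm_num
  -- values of hmap on real points
  have hreal_p : ∀ x : ℝ, 0 < x → hmap c (↑x) = ((φp x : ℝ) : ℂ) := by
    intro x hx
    rw [hmap, G_ofReal (Or.inr hx), if_pos hx]
    push_cast
    simp [hφp_def]
    try ring
  have hreal_m : ∀ x : ℝ, x < -1 → hmap c (↑x) = ((φm x : ℝ) : ℂ) := by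
    intro x hx
    rw [hmap, G_ofReal (Or.inl hx), if_neg (by linarith)]
    push_cast
    simp [hφm_def]
    try ring
  -- the bijection
  have hmapim : ∀ z, (hmap c z).im = z.im := hmap_im c
  have hmapre : ∀ z, (hmap c z).re = z.re + 2*c*(G z).re := hmap_re c
  have hlinere : ∀ (y x : ℝ), (hmap c (↑x + ↑y * Complex.I)).re
      = x + 2*c*(G (↑x + ↑y * Complex.I)).re := by
    intro y x
    rw [hmapre]
    simp
  have hmaps : Set.MapsTo (hmap c) (Teich s) (Teich t) := by
    intro z hz
    rcases (mem_Teich_iff hs).1 hz with him | hre | ⟨h1, h2⟩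
    · rw [mem_Teich_iff ht]
      left
      rw [hmapim]
      exact him
    · by_cases him : z.im = 0
      · have hzre : z = (z.re : ℂ) := by apply Complex.ext <;> simp [him]
        rw [hzre, hreal_m _ hre, mem_Teich_iff ht]
        right; left
        simp only [Complex.ofReal_re]
        calc φm z.re < φm (-1) := hφm_mono (le_of_lt hre) (le_refl (-1:ℝ)) hre
          _ = -1 := hφm1
      · rw [mem_Teich_iff ht]; left; rw [hmapim]; exact him
    · by_cases him : z.im = 0
      · have hzre : z = (z.re : ℂ) := by apply Complex.ext <;> simp [him]
        rw [hzre, hreal_p _ h1, mem_Teich_iff ht]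
        right; right
        simp only [Complex.ofReal_re]
        constructor
        · calc (0:ℝ) = φp 0 := hφp0.symm
            _ < φp z.re := hφp_mono (le_refl (0:ℝ)) (le_of_lt h1) h1
        · calc φp z.re < φp s := hφp_mono (le_of_lt h1) (le_of_lt hs) h2
            _ = t := hφps
      · rw [mem_Teich_iff ht]; left; rw [hmapim]; exact him
  have hinj : Set.InjOn (hmap c) (Teich s) := by
    intro z1 hz1 z2 hz2 heq
    have him : z1.im = z2.im := by
      have := congrArg Complex.im heq
      rwa [hmapim, hmapim] at this
    by_cases hy : z1.im = 0
    · -- both real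
      have hy2 : z2.im = 0 := by rw [← him]; exact hy
      have hz1re : z1 = (z1.re : ℂ) := by apply Complex.ext <;> simp [hy]
      have hz2re : z2 = (z2.re : ℂ) := by apply Complex.ext <;> simp [hy2]
      have hx1 : z1.re < -1 ∨ (0 < z1.re ∧ z1.re < s) := by
        rcases (mem_Teich_iff hs).1 hz1 with h | h | h
        · exact absurd hy h
        · exact Or.inl h
        · exact Or.inr h
      have hx2 : z2.re < -1 ∨ (0 < z2.re ∧ z2.re < s) := by
        rcases (mem_Teich_iff hs).1 hz2 with h | h | h
        · exact absurd hy2 h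
        · exact Or.inl h
        · exact Or.inr h
      rw [hz1re, hz2re]
      norm_cast
      rcases hx1 with h1 | ⟨h1, h1'⟩ <;> rcases hx2 with h2 | ⟨h2, h2'⟩
      · -- both < -1 : use φm injectivity
        have e1 := hreal_m _ h1
        have e2 := hreal_m _ h2
        rw [hz1re] at heq
        rw [hz2re] at heq
        rw [e1, e2] at heq
        have : φm z1.re = φm z2.re := by exact_mod_cast heq
        exact hφm_mono.injOn (le_of_lt h1) (le_of_lt h2) this
      · -- mixed: contradiction
        exfalso
        have e1 := hreal_m _ h1
        have e2 := hreal_p _ h2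
        rw [hz1re] at heq; rw [hz2re] at heq; rw [e1, e2] at heq
        have heq' : φm z1.re = φp z2.re := by exact_mod_cast heq
        have hv1 : φm z1.re < -1 := by
          calc φm z1.re < φm (-1) := hφm_mono (le_of_lt h1) (le_refl (-1:ℝ)) h1
            _ = -1 := hφm1
        have hv2 : 0 < φp z2.re := by
          calc (0:ℝ) = φp 0 := hφp0.symm
            _ < φp z2.re := hφp_mono (le_refl (0:ℝ)) (le_of_lt h2) h2
        linarith
      · exfalso
        have e1 := hreal_p _ h1
        have e2 := hreal_m _ h2
        rw [hz1re] at heq; rw [hz2re] at heq; rw [e1, e2] at heq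
        have heq' : φp z1.re = φm z2.re := by exact_mod_cast heq
        have hv1 : φm z2.re < -1 := by
          calc φm z2.re < φm (-1) := hφm_mono (le_of_lt h2) (le_refl (-1:ℝ)) h2
            _ = -1 := hφm1
        have hv2 : 0 < φp z1.re := by
          calc (0:ℝ) = φp 0 := hφp0.symm
            _ < φp z1.re := hφp_mono (le_refl (0:ℝ)) (le_of_lt h1) h1
        linarith
      · have e1 := hreal_p _ h1
        have e2 := hreal_p _ h2
        rw [hz1re] at heq; rw [hz2re] at heq; rw [e1, e2] at heq
        have : φp z1.re = φp z2.re := by exact_mod_cast heq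
        exact hφp_mono.injOn (le_of_lt h1) (le_of_lt h2) this
    · -- im ≠ 0
      set y := z1.im with hy_def
      have hz1' : z1 = ↑z1.re + ↑y * Complex.I := by
        apply Complex.ext <;> simp [hy_def]
      have hz2' : z2 = ↑z2.re + ↑y * Complex.I := by
        apply Complex.ext <;> simp [him]
      have hre_eq : (hmap c z1).re = (hmap c z2).re := by rw [heq]
      rw [hz1'] at hre_eq
      rw [hz2'] at hre_eq
      rw [hlinere, hlinere] at hre_eq
      have h8 := (hmono y hy).injective hre_eq
      apply Complex.ext
      · exact h8
      · exact him
  have hsurj : Set.SurjOn (hmap c) (Teich s) (Teich t) := by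
    intro w hw
    rcases (mem_Teich_iff ht).1 hw with him | hre | ⟨h1, h2⟩
    · -- im ≠ 0 case
      obtain ⟨x, hx⟩ := hsurjline w.im him w.re
      refine ⟨↑x + ↑w.im * Complex.I, hmemline w.im him x, ?_⟩
      apply Complex.ext
      · rw [hlinere]; exact hx
      · rw [hmapim]; simp
    · by_cases him : w.im = 0
      · -- w real < -1
        have hwre : w = (w.re : ℂ) := by apply Complex.ext <;> simp [him]
        have hA : w.re - 1 ≤ -1 := by linarith
        have hφmA : φm (w.re - 1) < w.re := by
          have h5 : Real.sqrt ((w.re-1)^2 + (w.re-1)) ≥ 0 := Real.sqrt_nonneg _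
          have h6 : 0 ≤ 2*c*Real.sqrt ((w.re-1)^2 + (w.re-1)) := mul_nonneg (by linarith) h5
          simp only [hφm_def]
          linarith
        obtain ⟨x, hx_mem, hx⟩ := intermediate_value_Ioo hA hφm_cont.continuousOn
          (show w.re ∈ Set.Ioo (φm (w.re - 1)) (φm (-1)) by
            rw [hφm1]; exact ⟨hφmA, hre⟩)
        refine ⟨↑x, ?_, ?_⟩
        · rw [mem_Teich_iff hs]
          right; left
          simpa using hx_mem.2
        · rw [hreal_m _ hx_mem.2, hx, ← hwre]
      · obtain ⟨x, hx⟩ := hsurjline w.im him w.re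
        refine ⟨↑x + ↑w.im * Complex.I, hmemline w.im him x, ?_⟩
        apply Complex.ext
        · rw [hlinere]; exact hx
        · rw [hmapim]; simp
    · by_cases him : w.im = 0
      · have hwre : w = (w.re : ℂ) := by apply Complex.ext <;> simp [him]
        obtain ⟨x, hx_mem, hx⟩ := intermediate_value_Ioo (le_of_lt hs) hφp_cont.continuousOn
          (show w.re ∈ Set.Ioo (φp 0) (φp s) by rw [hφp0, hφps]; exact ⟨h1, h2⟩)
        refine ⟨↑x, ?_, ?_⟩
        · rw [mem_Teich_iff hs]
          right; right
          simpa using hx_mem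
        · rw [hreal_p _ hx_mem.1, hx, ← hwre]
      · obtain ⟨x, hx⟩ := hsurjline w.im him w.re
        refine ⟨↑x + ↑w.im * Complex.I, hmemline w.im him x, ?_⟩
        apply Complex.ext
        · rw [hlinere]; exact hx
        · rw [hmapim]; simp
  have hbij : Set.BijOn (hmap c) (Teich s) (Teich t) := ⟨hmaps, hinj, hsurj⟩
  -- continuity of hmap
  have hcont : ContinuousOn (hmap c) (Teich s) := by
    intro z hz
    obtain ⟨hz0, hsp⟩ := hdomS z hz
    exact (hasFDerivAt_hmap c hz0 hsp).continuousAt.continuousWithinAt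
  -- harmonicity
  have hharm : HarmonicMapOn (hmap c) (Teich s) := by
    constructor
    · have hdiffS : DifferentiableOn ℂ (fun z => z + ((2*c : ℝ) : ℂ) * G z) (Teich s) := by
        intro z hz
        obtain ⟨hz0, hsp⟩ := hdomS z hz
        exact (differentiableAt_id.add
          (((hasDerivAt_G hz0 hsp).differentiableAt).const_mul _)).differentiableWithinAt
      have hh := harmonicOnReal_re_of_holo (isOpen_Teich s) hdiffS
      convert hh using 1
      funext z
      rw [hmapre]
      simp [Complex.add_re, Complex.mul_re]
    · have hdiff2 : DifferentiableOn ℂ (fun z : ℂ => -Complex.I * z) (Teich s) :=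
        (differentiable_const _ |>.mul differentiable_id).differentiableOn
      have hh := harmonicOnReal_re_of_holo (isOpen_Teich s) hdiff2
      convert hh using 1
      funext z
      rw [hmapim]
      simp [Complex.mul_re]
  -- the inverse
  set g : ℂ → ℂ := Function.invFunOn (hmap c) (Teich s) with hg_def
  have hinv := hbij.invOn_invFunOn
  have hgmaps : Set.MapsTo g (Teich t) (Teich s) := hsurj.mapsTo_invFunOn
  have hleft : ∀ z ∈ Teich s, g (hmap c z) = z := fun z hz => hinv.1 hz
  have hright : ∀ w ∈ Teich t, hmap c (g w) = w := fun w hw => hinv.2 hw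
  have hopen : ∀ z ∈ Teich s, Filter.map (hmap c) (nhds z) = nhds (hmap c z) := by
    intro z hz
    obtain ⟨hz0, hsp⟩ := hdomS z hz
    apply map_nhds_hmap c hz0 hsp
    have h9 := hGd z hz
    have h10 := mul_pos hc h9
    have : 0 < 1 + 2*c*((z + 2⁻¹)/G z).re := by linarith
    exact ne_of_gt this
  have hgcont : ContinuousOn g (Teich t) := by
    intro w hw
    have hzw : g w ∈ Teich s := hgmaps hw
    have htend : Filter.Tendsto g (nhdsWithin w (Teich t)) (nhds (g w)) := by
      rw [(nhds_basis_opens (g w)).tendsto_right_iff]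
      rintro U ⟨hgU, hUopen⟩
      have hUD : U ∩ Teich s ∈ nhds (g w) :=
        Filter.inter_mem (hUopen.mem_nhds hgU) ((isOpen_Teich s).mem_nhds hzw)
      have himg : hmap c '' (U ∩ Teich s) ∈ nhds w := by
        have h6 := hopen (g w) hzw
        rw [hright w hw] at h6
        rw [← h6]
        exact Filter.image_mem_map hUD
      filter_upwards [mem_nhdsWithin_of_mem_nhds himg, self_mem_nhdsWithin] with w' hw' hw't
      obtain ⟨ζ, hζ, hζw⟩ := hw'
      have h7 : g w' = ζ := by rw [← hζw]; exact hleft ζ hζ.2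
      rw [h7]; exact hζ.1
    exact htend
  exact ⟨hmap c, hharm, hcont, hbij, g, hgcont, hleft, hright⟩
end
end

section
/- Let 1 < α ≤ 3/2 and let G = ℂ ∖ (−∞,0] be the slit plane. Define h : G → ℂ by h(z) = Re(z^α) + i·Im(z), where z^α is the principal branch of the power (so that 1^α = 1). Then h is a homeomorphism of G onto G whose real and imaginary parts are harmonic, and for every s > 0 it maps G ∖ [s, s+1] onto G ∖ [s^α, (s+1)^α]. -/
noncomputable section

/-! ### Auxiliary lemmas -/

open Complex Set Real Filter Topology

lemma aux_slit_eq : (Complex.ofReal '' Set.Iic 0)ᶜ = Complex.slitPlane := by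
  ext z
  simp only [Set.mem_compl_iff, Set.mem_image, Complex.mem_slitPlane_iff, Set.mem_Iic]
  constructor
  · intro hz
    by_contra hc
    push_neg at hc
    exact hz ⟨z.re, hc.1, by apply Complex.ext <;> simp [hc.2.symm]⟩
  · rintro hz ⟨x, hx, rfl⟩
    simp only [Complex.ofReal_re, Complex.ofReal_im, ne_eq, not_true_eq_false, or_false] at hz
    exact absurd hz (not_lt.2 hx)

lemma aux_abs_arg_lt_pi {z : ℂ} (hz : z ∈ Complex.slitPlane) : |Complex.arg z| < π := by
  rcases abs_arg_le_pi z |>.lt_or_eq with h | h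
  · exact h
  · exfalso
    rcases abs_eq (le_of_lt Real.pi_pos) |>.1 h with h1 | h1
    · exact Complex.slitPlane_arg_ne_pi hz h1
    · exact absurd h1 (ne_of_gt (Complex.neg_pi_lt_arg z))

lemma aux_re_cpow_pos {β : ℝ} (hβ0 : 0 < β) (hβ : β ≤ 1/2) {z : ℂ}
    (hz : z ∈ Complex.slitPlane) : 0 < (z ^ (β : ℂ)).re := by
  rw [Complex.cpow_ofReal_re]
  have hzne : z ≠ 0 := Complex.slitPlane_ne_zero hz
  have habs : 0 < ‖z‖ := norm_pos_iff.mpr hzne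
  have harg : |Complex.arg z| < π := aux_abs_arg_lt_pi hz
  have habsm : |Complex.arg z * β| < π/2 := by
    rw [abs_mul, abs_of_pos hβ0]
    calc |Complex.arg z| * β < π * β := mul_lt_mul_of_pos_right harg hβ0
      _ ≤ π * (1/2) := by nlinarith [Real.pi_pos]
      _ = π/2 := by ring
  have hcos : 0 < Real.cos (Complex.arg z * β) := by
    apply Real.cos_pos_of_mem_Ioo
    exact ⟨by linarith [abs_lt.1 habsm |>.1], by linarith [abs_lt.1 habsm |>.2]⟩
  exact mul_pos (Real.rpow_pos_of_pos habs β) hcos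

lemma aux_hasDerivAt_phi (α y x : ℝ) (hx : (x : ℂ) + y * Complex.I ∈ Complex.slitPlane) :
    HasDerivAt (fun t : ℝ => ((((t : ℂ) + y * Complex.I)) ^ (α : ℂ)).re)
      (((α : ℂ) * ((x : ℂ) + y * Complex.I) ^ ((α : ℂ) - 1)).re) x := by
  have hg : HasDerivAt (fun t : ℝ => ((t : ℂ) + y * Complex.I)) 1 x := by
    simpa using (Complex.ofRealCLM.hasDerivAt (x := x)).add_const ((y : ℂ) * Complex.I)
  have hf := (Complex.hasStrictDerivAt_cpow_const (c := (α : ℂ)) hx).hasDerivAt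
  have hcomp := (hf.hasFDerivAt.restrictScalars ℝ).comp_hasDerivAt x hg
  exact (Complex.reCLM.hasFDerivAt.comp_hasDerivAt x hcomp).congr_deriv (by simp)

lemma aux_strictMonoOn_phi {α : ℝ} (hα1 : 1 < α) (hα2 : α ≤ 3/2) (y : ℝ) :
    StrictMonoOn (fun t : ℝ => ((((t : ℂ) + y * Complex.I)) ^ (α : ℂ)).re)
      {x : ℝ | (x : ℂ) + y * Complex.I ∈ Complex.slitPlane} := by
  set U : Set ℝ := {x : ℝ | (x : ℂ) + y * Complex.I ∈ Complex.slitPlane} with hU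
  have hUopen : IsOpen U := by
    apply IsOpen.preimage (f := fun x : ℝ => (x : ℂ) + y * Complex.I) (by continuity)
      Complex.isOpen_slitPlane
  have hUconv : Convex ℝ U := by
    have : U = {x : ℝ | 0 < x ∨ y ≠ 0} := by
      ext x; simp [hU, Complex.mem_slitPlane_iff]
    rw [this]
    by_cases hy : y = 0
    · simp [hy]; exact convex_Ioi 0
    · have : {x : ℝ | 0 < x ∨ y ≠ 0} = Set.univ := by ext x; simp [hy]
      rw [this]; exact convex_univ
  apply strictMonoOn_of_deriv_pos hUconv
  · intro x hx
    exact ((aux_hasDerivAt_phi α y x hx).continuousAt).continuousWithinAt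
  · intro x hx
    rw [hUopen.interior_eq] at hx
    rw [(aux_hasDerivAt_phi α y x hx).deriv]
    have h1 : ((α : ℂ) - 1) = (((α - 1 : ℝ)) : ℂ) := by push_cast; ring
    rw [h1, Complex.re_ofReal_mul]
    exact mul_pos (by linarith)
      (aux_re_cpow_pos (by linarith) (by linarith) hx)

lemma aux_phi_lower_bound {α y x : ℝ} (hα1 : 1 < α) (hα2 : α ≤ 3/2)
    (hyx : |y| ≤ x) (hx : 0 < x) :
    Real.cos (3*π/8) * x ^ α ≤ (((x : ℂ) + y * Complex.I) ^ (α : ℂ)).re := by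
  set z : ℂ := (x : ℂ) + y * Complex.I with hz
  have hre : z.re = x := by simp [hz]
  have him : z.im = y := by simp [hz]
  have hzne : z ≠ 0 := fun h => by rw [h] at hre; simp at hre; exact hx.ne' hre.symm
  have habs : 0 < ‖z‖ := norm_pos_iff.mpr hzne
  have hxr : x ≤ ‖z‖ := by
    calc x = z.re := hre.symm
    _ ≤ |z.re| := le_abs_self _
    _ ≤ ‖z‖ := Complex.abs_re_le_norm z
  have hr2 : ‖z‖ ≤ Real.sqrt 2 * x := by
    apply le_of_sq_le_sq _ (by positivity)
    rw [Complex.sq_norm, Complex.normSq_apply, hre, him, mul_pow, Real.sq_sqrt (by norm_num)]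
    nlinarith [_root_.sq_abs y, hyx, abs_nonneg y, sq_nonneg (x - |y|)]
  have hcosθ : Real.sqrt 2 / 2 ≤ Real.cos z.arg := by
    rw [Complex.cos_arg hzne, hre]
    rw [div_le_div_iff₀ (by norm_num) habs]
    calc Real.sqrt 2 * ‖z‖ ≤ Real.sqrt 2 * (Real.sqrt 2 * x) :=
          mul_le_mul_of_nonneg_left hr2 (Real.sqrt_nonneg 2)
    _ = 2 * x := by rw [← mul_assoc, Real.mul_self_sqrt (by norm_num : (0:ℝ) ≤ 2)]
    _ = x * 2 := by ring
  have hθ : |z.arg| ≤ π/4 := by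
    by_contra hcon
    push_neg at hcon
    have h1 : Real.cos z.arg < Real.sqrt 2 / 2 := by
      rw [← Real.cos_abs]
      calc Real.cos |z.arg| < Real.cos (π/4) :=
            Real.cos_lt_cos_of_nonneg_of_le_pi (by positivity) (Complex.abs_arg_le_pi z) hcon
      _ = Real.sqrt 2 / 2 := Real.cos_pi_div_four
    linarith
  have hθα : |z.arg * α| ≤ 3*π/8 := by
    rw [abs_mul, abs_of_pos (by linarith : (0:ℝ) < α)]
    calc |z.arg| * α ≤ (π/4) * (3/2) :=
          mul_le_mul hθ hα2 (by linarith) (by positivity)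
    _ = 3*π/8 := by ring
  have h38 : (3*π/8 : ℝ) ≤ π/2 := by linarith [Real.pi_pos]
  have hcos2 : Real.cos (3*π/8) ≤ Real.cos (z.arg * α) := by
    rw [← Real.cos_abs (z.arg * α)]
    exact Real.cos_le_cos_of_nonneg_of_le_pi (abs_nonneg _) (by linarith [Real.pi_pos]) hθα
  have hcos38 : 0 ≤ Real.cos (3*π/8) :=
    Real.cos_nonneg_of_mem_Icc ⟨by linarith [Real.pi_pos], h38⟩
  rw [Complex.cpow_ofReal_re]
  calc Real.cos (3*π/8) * x ^ α ≤ Real.cos (z.arg * α) * x ^ α :=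
        mul_le_mul_of_nonneg_right hcos2 (Real.rpow_nonneg hx.le α)
  _ ≤ Real.cos (z.arg * α) * (‖z‖) ^ α := by
        apply mul_le_mul_of_nonneg_left (Real.rpow_le_rpow hx.le hxr (by linarith))
        linarith
  _ = ‖z‖ ^ α * Real.cos (z.arg * α) := by ring

lemma aux_phi_upper_bound {α y x : ℝ} (hα1 : 1 < α) (hα2 : α ≤ 3/2)
    (hy : y ≠ 0) (hx : x ≤ -|y|) :
    (((x : ℂ) + y * Complex.I) ^ (α : ℂ)).re ≤
      -(|y| * Real.sin (3*π/4*(α-1)) * (-x) ^ (α-1)) := by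
  set β : ℝ := α - 1 with hβdef
  have hβ0 : 0 < β := by simp [hβdef]; linarith
  have hβ2 : β ≤ 1/2 := by simp [hβdef]; linarith
  set z : ℂ := (x : ℂ) + y * Complex.I with hz
  have hre : z.re = x := by simp [hz]
  have him : z.im = y := by simp [hz]
  have hzslit : z ∈ Complex.slitPlane := Or.inr (by rw [him]; exact hy)
  have hzne : z ≠ 0 := Complex.slitPlane_ne_zero hzslit
  have habs : 0 < ‖z‖ := norm_pos_iff.mpr hzne
  have hyabs : 0 < |y| := abs_pos.2 hy
  have hxneg : x < 0 := lt_of_le_of_lt hx (by linarith)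
  have hxr : -x ≤ ‖z‖ := by
    calc -x = -z.re := by rw [hre]
    _ ≤ |z.re| := neg_le_abs _
    _ ≤ ‖z‖ := Complex.abs_re_le_norm z
  have hr2 : ‖z‖ ≤ Real.sqrt 2 * (-x) := by
    apply le_of_sq_le_sq _ (mul_nonneg (Real.sqrt_nonneg 2) (by linarith))
    rw [Complex.sq_norm, Complex.normSq_apply, hre, him, mul_pow, Real.sq_sqrt (by norm_num)]
    nlinarith [_root_.sq_abs y, hyabs]
  have hcosθ : Real.cos z.arg ≤ -(Real.sqrt 2 / 2) := by
    rw [Complex.cos_arg hzne, hre]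
    rw [div_le_iff₀ habs]
    have h2 : 0 < Real.sqrt 2 := by positivity
    calc x = -(Real.sqrt 2 / 2) * (Real.sqrt 2 * (-x)) := by
          rw [← mul_assoc]
          have : -(Real.sqrt 2 / 2) * Real.sqrt 2 = -1 := by
            rw [neg_mul, div_mul_eq_mul_div, Real.mul_self_sqrt (by norm_num : (0:ℝ) ≤ 2)]
            norm_num
          rw [this]; ring
    _ ≤ -(Real.sqrt 2 / 2) * ‖z‖ :=
          mul_le_mul_of_nonpos_left hr2 (by linarith [h2])
  have harglt : |z.arg| < π := aux_abs_arg_lt_pi hzslit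
  have hθ : 3*π/4 ≤ |z.arg| := by
    by_contra hcon
    push_neg at hcon
    have h1 : -(Real.sqrt 2/2) < Real.cos z.arg := by
      rw [← Real.cos_abs]
      calc -(Real.sqrt 2/2) = Real.cos (3*π/4) := by
            rw [show (3*π/4 : ℝ) = π - π/4 by ring, Real.cos_pi_sub, Real.cos_pi_div_four]
      _ < Real.cos |z.arg| :=
            Real.cos_lt_cos_of_nonneg_of_le_pi (abs_nonneg _) (by linarith [Real.pi_pos]) hcon
    linarith
  set c : ℝ := Real.sin (3*π/4*β) with hc
  have hcβrange : 0 < 3*π/4*β ∧ 3*π/4*β ≤ π/2 := by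
    constructor
    · positivity
    · nlinarith [Real.pi_pos]
  have hcpos : 0 < c := Real.sin_pos_of_pos_of_lt_pi hcβrange.1 (by linarith [Real.pi_pos])
  have hsinmono := Real.strictMonoOn_sin.monotoneOn
  have hargβlt : |z.arg * β| < π/2 := by
    rw [abs_mul, abs_of_pos hβ0]
    calc |z.arg| * β < π * β := mul_lt_mul_of_pos_right harglt hβ0
      _ ≤ π * (1/2) := by nlinarith [Real.pi_pos]
      _ = π/2 := by ring
  have hargβlow : -(π/2) ≤ z.arg * β := by linarith [abs_lt.1 hargβlt |>.1]
  have hargβhigh : z.arg * β ≤ π/2 := by linarith [abs_lt.1 hargβlt |>.2]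
  have hβπlow : -(π/2) ≤ -(3*π/4*β) := by linarith
  have hβπhigh : -(3*π/4*β) ≤ π/2 := by linarith
  have hkey : |y| * c ≤ y * Real.sin (z.arg * β) := by
    rcases lt_or_gt_of_ne hy with hneg | hpos
    · have hargneg : z.arg < 0 := Complex.arg_neg_iff.2 (by rw [him]; exact hneg)
      have hargle : z.arg ≤ -(3*π/4) := by
        rcases abs_cases z.arg with ⟨h1, _⟩ | ⟨h1, _⟩
        · linarith
        · linarith
      have hprod : z.arg * β ≤ -(3*π/4*β) := by
        have := mul_le_mul_of_nonneg_right hargle hβ0.le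
        linarith
      have hs : Real.sin (z.arg * β) ≤ Real.sin (-(3*π/4*β)) :=
        hsinmono ⟨hargβlow, hargβhigh⟩ ⟨hβπlow, hβπhigh⟩ hprod
      rw [Real.sin_neg] at hs
      have h3 : y * (-c) ≤ y * Real.sin (z.arg * β) :=
        mul_le_mul_of_nonpos_left hs (le_of_lt hneg)
      calc |y| * c = y * (-c) := by rw [abs_of_neg hneg]; ring
      _ ≤ y * Real.sin (z.arg * β) := h3
    · have hargpos : 0 ≤ z.arg := Complex.arg_nonneg_iff.2 (by rw [him]; exact hpos.le)
      have hargge : 3*π/4 ≤ z.arg := by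
        rcases abs_cases z.arg with ⟨h1, _⟩ | ⟨h1, _⟩
        · linarith
        · linarith
      have hprod : 3*π/4*β ≤ z.arg * β := by
        have := mul_le_mul_of_nonneg_right hargge hβ0.le
        linarith
      have hs : Real.sin (3*π/4*β) ≤ Real.sin (z.arg * β) :=
        hsinmono ⟨by linarith, by linarith⟩ ⟨hargβlow, hargβhigh⟩ hprod
      calc |y| * c = y * Real.sin (3*π/4*β) := by rw [abs_of_pos hpos]
      _ ≤ y * Real.sin (z.arg * β) := mul_le_mul_of_nonneg_left hs hpos.le
  have hsplit : z ^ (α : ℂ) = z * z ^ ((β : ℝ) : ℂ) := by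
    have : (α : ℂ) = 1 + (β : ℂ) := by rw [hβdef]; push_cast; ring
    rw [this, Complex.cpow_add _ _ hzne, Complex.cpow_one]
  rw [hsplit, Complex.mul_re, hre, him]
  have hwre : 0 < (z ^ ((β:ℝ) : ℂ)).re := aux_re_cpow_pos hβ0 hβ2 hzslit
  have hwim : (z ^ ((β:ℝ) : ℂ)).im = ‖z‖ ^ β * Real.sin (z.arg * β) :=
    Complex.cpow_ofReal_im z β
  have h1 : x * (z ^ ((β:ℝ):ℂ)).re ≤ 0 := mul_nonpos_of_nonpos_of_nonneg hxneg.le hwre.le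
  have h2 : |y| * c * (-x) ^ β ≤ y * (z ^ ((β:ℝ):ℂ)).im := by
    rw [hwim]
    have hrpow : (-x) ^ β ≤ ‖z‖ ^ β :=
      Real.rpow_le_rpow (by linarith) hxr hβ0.le
    calc |y| * c * (-x) ^ β ≤ |y| * c * ‖z‖ ^ β :=
          mul_le_mul_of_nonneg_left hrpow (by positivity)
    _ ≤ (y * Real.sin (z.arg * β)) * ‖z‖ ^ β :=
          mul_le_mul_of_nonneg_right hkey (Real.rpow_nonneg habs.le β)
    _ = y * (‖z‖ ^ β * Real.sin (z.arg * β)) := by ring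
  linarith

lemma aux_continuous_phi {α y : ℝ} (hy : y ≠ 0) :
    Continuous (fun t : ℝ => ((((t : ℂ) + y * Complex.I)) ^ (α : ℂ)).re) := by
  rw [continuous_iff_continuousAt]
  intro x
  apply Complex.continuous_re.continuousAt.comp
  apply ContinuousAt.comp (continuousAt_cpow_const ?_) (by fun_prop)
  exact Or.inr (by simp [hy])

lemma aux_surjective_phi {α y : ℝ} (hα1 : 1 < α) (hα2 : α ≤ 3/2) (hy : y ≠ 0) :
    Function.Surjective (fun t : ℝ => ((((t : ℂ) + y * Complex.I)) ^ (α : ℂ)).re) := by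
  apply Continuous.surjective (aux_continuous_phi hy)
  · apply tendsto_atTop_mono' _ _
      ((tendsto_rpow_atTop (by linarith : (0:ℝ) < α)).const_mul_atTop
        (Real.cos_pos_of_mem_Ioo ⟨by linarith [Real.pi_pos], by linarith [Real.pi_pos]⟩ :
          (0:ℝ) < Real.cos (3*π/8)))
    filter_upwards [eventually_ge_atTop (max |y| 1)] with x hx
    exact aux_phi_lower_bound hα1 hα2 (le_trans (le_max_left _ _) hx)
      (lt_of_lt_of_le (by norm_num) (le_trans (le_max_right _ _) hx))
  · have hβ0 : (0:ℝ) < α - 1 := by linarith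
    have hcpos : 0 < |y| * Real.sin (3*π/4*(α-1)) := by
      apply mul_pos (abs_pos.2 hy)
      apply Real.sin_pos_of_pos_of_lt_pi
      · positivity
      · nlinarith [Real.pi_pos]
    have htend : Tendsto (fun x : ℝ => -(|y| * Real.sin (3*π/4*(α-1)) * (-x) ^ (α-1)))
        atBot atBot := by
      apply Filter.tendsto_neg_atTop_atBot.comp
      apply Filter.Tendsto.const_mul_atTop hcpos
      exact (tendsto_rpow_atTop hβ0).comp tendsto_neg_atBot_atTop
    apply tendsto_atBot_mono' _ _ htend
    filter_upwards [eventually_le_atBot (-|y|)] with x hx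
    exact aux_phi_upper_bound hα1 hα2 hy hx

lemma aux_fderiv_re_apply {f : ℂ → ℂ} {d z : ℂ} (hf : HasDerivAt f d z) (v : ℂ) :
    fderiv ℝ (fun w => (f w).re) z v = (d * v).re := by
  have hF : HasFDerivAt (fun w => (f w).re)
      (Complex.reCLM.comp ((ContinuousLinearMap.smulRight (1 : ℂ →L[ℂ] ℂ) d).restrictScalars ℝ))
      z := Complex.reCLM.hasFDerivAt.comp z (hf.hasFDerivAt.restrictScalars ℝ)
  rw [hF.fderiv]
  simp [mul_comm]

lemma aux_harmonic_re_cpow (α : ℝ) :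
    HarmonicOnReal (fun z => (z ^ (α : ℂ)).re) Complex.slitPlane := by
  set c : ℂ := (α : ℂ) with hc
  constructor
  · have hd : DifferentiableOn ℂ (fun w : ℂ => w ^ c) Complex.slitPlane := fun w hw =>
      ((Complex.hasStrictDerivAt_cpow_const hw).hasDerivAt.differentiableAt).differentiableWithinAt
    have han := hd.analyticOnNhd Complex.isOpen_slitPlane
    have hcd : ContDiffOn ℂ 2 (fun w : ℂ => w ^ c) Complex.slitPlane :=
      han.contDiffOn Complex.isOpen_slitPlane.uniqueDiffOn
    exact Complex.reCLM.contDiff.comp_contDiffOn (hcd.restrict_scalars ℝ)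
  · intro z hz
    set F : ℂ → ℂ := fun w => c * w ^ (c - 1) with hF
    have hf' : ∀ w ∈ Complex.slitPlane, HasDerivAt (fun w : ℂ => w ^ c) (F w) w := fun w hw =>
      (Complex.hasStrictDerivAt_cpow_const hw).hasDerivAt
    have hF' : HasDerivAt F (c * ((c - 1) * z ^ (c - 1 - 1))) z :=
      ((Complex.hasStrictDerivAt_cpow_const (c := c - 1) hz).hasDerivAt).const_mul c
    set d2 : ℂ := c * ((c - 1) * z ^ (c - 1 - 1)) with hd2
    have hnhds : Complex.slitPlane ∈ 𝓝 z := Complex.isOpen_slitPlane.mem_nhds hz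
    have ev1 : (fun w => fderiv ℝ (fun z : ℂ => (z ^ c).re) w 1) =ᶠ[𝓝 z]
        (fun w => ((F w : ℂ) * 1).re) := by
      filter_upwards [hnhds] with w hw
      exact aux_fderiv_re_apply (hf' w hw) 1
    have t1 : fderiv ℝ (fun w => fderiv ℝ (fun z : ℂ => (z ^ c).re) w 1) z 1
        = (d2 * 1 * 1).re := by
      rw [ev1.fderiv_eq]
      exact aux_fderiv_re_apply (hF'.mul_const 1) 1
    have ev2 : (fun w => fderiv ℝ (fun z : ℂ => (z ^ c).re) w Complex.I) =ᶠ[𝓝 z]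
        (fun w => ((F w : ℂ) * Complex.I).re) := by
      filter_upwards [hnhds] with w hw
      exact aux_fderiv_re_apply (hf' w hw) Complex.I
    have t2 : fderiv ℝ (fun w => fderiv ℝ (fun z : ℂ => (z ^ c).re) w Complex.I) z Complex.I
        = (d2 * Complex.I * Complex.I).re := by
      rw [ev2.fderiv_eq]
      exact aux_fderiv_re_apply (hF'.mul_const Complex.I) Complex.I
    rw [t1, t2]
    have : d2 * Complex.I * Complex.I = -d2 := by
      rw [mul_assoc, Complex.I_mul_I, mul_neg_one]
    rw [this]
    simp

lemma aux_harmonic_im : HarmonicOnReal (fun z : ℂ => z.im) Complex.slitPlane := by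
  constructor
  · exact Complex.imCLM.contDiff.contDiffOn
  · intro z hz
    have hfd : ∀ w : ℂ, fderiv ℝ (fun z : ℂ => z.im) w = Complex.imCLM := fun w =>
      Complex.imCLM.hasFDerivAt.fderiv
    have h1 : (fun w => fderiv ℝ (fun z : ℂ => z.im) w 1) = fun _ : ℂ => (0:ℝ) := by
      funext w; rw [hfd w]; simp
    have h2 : (fun w => fderiv ℝ (fun z : ℂ => z.im) w Complex.I) = fun _ : ℂ => (1:ℝ) := by
      funext w; rw [hfd w]; simp
    rw [h1, h2, fderiv_fun_const]
    simp

lemma aux_image_rpow {α s t : ℝ} (hα : 0 < α) (hs : 0 < s) (hst : s ≤ t) :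
    (fun x : ℝ => x ^ α) '' Set.Icc s t = Set.Icc (s ^ α) (t ^ α) := by
  apply Set.Subset.antisymm
  · rintro _ ⟨x, ⟨hx1, hx2⟩, rfl⟩
    exact ⟨Real.rpow_le_rpow hs.le hx1 hα.le,
      Real.rpow_le_rpow (by linarith) hx2 hα.le⟩
  · rintro u ⟨hu1, hu2⟩
    have hu0 : 0 ≤ u := le_trans (Real.rpow_nonneg hs.le α) hu1
    refine ⟨u ^ α⁻¹, ⟨?_, ?_⟩, Real.rpow_inv_rpow hu0 hα.ne'⟩
    · calc s = (s ^ α) ^ α⁻¹ := (Real.rpow_rpow_inv hs.le hα.ne').symm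
      _ ≤ u ^ α⁻¹ := Real.rpow_le_rpow (Real.rpow_nonneg hs.le α) hu1 (by positivity)
    · calc u ^ α⁻¹ ≤ (t ^ α) ^ α⁻¹ := Real.rpow_le_rpow hu0 hu2 (by positivity)
      _ = t := Real.rpow_rpow_inv (by linarith) hα.ne'

/-- The map `h(z) = Re(z^α) + i Im z` is a harmonic homeomorphism of the slit
plane `G = ℂ \ (-∞,0]` onto itself mapping `G \ [s,s+1]` onto `G \ [s^α,(s+1)^α]`. -/
theorem stmt10 (α : ℝ) (hα1 : 1 < α) (hα2 : α ≤ 3/2)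
    (h : ℂ → ℂ)
    (hh : ∀ z : ℂ, h z = (((z ^ (α : ℂ)).re : ℂ)) + Complex.I * (z.im : ℂ)) :
    HarmonicMapOn h ((Complex.ofReal '' Set.Iic 0)ᶜ) ∧
    ContinuousOn h ((Complex.ofReal '' Set.Iic 0)ᶜ) ∧
    Set.BijOn h ((Complex.ofReal '' Set.Iic 0)ᶜ) ((Complex.ofReal '' Set.Iic 0)ᶜ) ∧
    (∃ g : ℂ → ℂ, ContinuousOn g ((Complex.ofReal '' Set.Iic 0)ᶜ) ∧
      ∀ z ∈ ((Complex.ofReal '' Set.Iic 0)ᶜ : Set ℂ), g (h z) = z) ∧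
    ∀ s : ℝ, 0 < s →
      h '' ((Complex.ofReal '' Set.Iic 0)ᶜ \ Complex.ofReal '' Set.Icc s (s + 1)) =
        (Complex.ofReal '' Set.Iic 0)ᶜ \ Complex.ofReal '' Set.Icc (s ^ α) ((s + 1) ^ α) := by
  rw [aux_slit_eq]
  have hre : ∀ z : ℂ, (h z).re = (z ^ (α : ℂ)).re := by
    intro z; rw [hh]; simp
  have him : ∀ z : ℂ, (h z).im = z.im := by
    intro z; rw [hh]; simp
  have hαpos : (0:ℝ) < α := by linarith
  -- h of a positive real
  have hofreal : ∀ x : ℝ, 0 < x → h (x : ℂ) = ((x ^ α : ℝ) : ℂ) := by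
    intro x hx
    rw [hh]
    rw [← Complex.ofReal_cpow hx.le]
    simp
  -- membership of re in the monotonicity domain
  have hmemU : ∀ z : ℂ, z ∈ Complex.slitPlane →
      z.re ∈ {x : ℝ | (x : ℂ) + z.im * Complex.I ∈ Complex.slitPlane} := by
    intro z hz
    simp only [Set.mem_setOf_eq]
    rwa [Complex.re_add_im]
  -- MapsTo
  have hmaps : Set.MapsTo h Complex.slitPlane Complex.slitPlane := by
    intro z hz
    rw [Complex.mem_slitPlane_iff]
    by_cases him0 : z.im = 0
    · left
      have hzre : 0 < z.re := by
        rcases Complex.mem_slitPlane_iff.1 hz with h1 | h1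
        · exact h1
        · exact absurd him0 h1
      have hzeq : z = (z.re : ℂ) := Complex.ext (by simp) (by simp [him0])
      rw [hre, hzeq, ← Complex.ofReal_cpow hzre.le]
      simpa using Real.rpow_pos_of_pos hzre α
    · right; rw [him]; exact him0
  -- InjOn
  have hinj : Set.InjOn h Complex.slitPlane := by
    intro z hz z' hz' heq
    have him_eq : z.im = z'.im := by
      have := congrArg Complex.im heq
      rwa [him, him] at this
    have hre_eq : (z ^ (α:ℂ)).re = (z' ^ (α:ℂ)).re := by
      have := congrArg Complex.re heq
      rwa [hre, hre] at this
    have hm := aux_strictMonoOn_phi hα1 hα2 z.im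
    have h1 := hmemU z hz
    have h2 : z'.re ∈ {x : ℝ | (x : ℂ) + z.im * Complex.I ∈ Complex.slitPlane} := by
      rw [him_eq]; exact hmemU z' hz'
    have hre_eq' : z.re = z'.re := by
      apply hm.injOn h1 h2
      simp only []
      rw [Complex.re_add_im, him_eq, Complex.re_add_im]
      exact hre_eq
    exact Complex.ext hre_eq' him_eq
  -- SurjOn
  have hsurj : Set.SurjOn h Complex.slitPlane Complex.slitPlane := by
    intro w hw
    by_cases hwim : w.im = 0
    · have hwre : 0 < w.re := by
        rcases Complex.mem_slitPlane_iff.1 hw with h1 | h1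
        · exact h1
        · exact absurd hwim h1
      refine ⟨((w.re ^ α⁻¹ : ℝ) : ℂ), ?_, ?_⟩
      · exact Complex.ofReal_mem_slitPlane.2 (Real.rpow_pos_of_pos hwre α⁻¹)
      · rw [hofreal _ (Real.rpow_pos_of_pos hwre α⁻¹),
          Real.rpow_inv_rpow hwre.le hαpos.ne']
        exact Complex.ext (by simp) (by simp [hwim])
    · obtain ⟨x, hx⟩ := aux_surjective_phi hα1 hα2 hwim w.re
      refine ⟨(x:ℂ) + w.im * Complex.I, Or.inr (by simp [hwim]), ?_⟩
      apply Complex.ext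
      · rw [hre]; exact hx
      · rw [him]; simp
  have hbij : Set.BijOn h Complex.slitPlane Complex.slitPlane := ⟨hmaps, hinj, hsurj⟩
  -- continuity of h
  have hcont : ContinuousOn h Complex.slitPlane := by
    have : ContinuousOn (fun z : ℂ => (((z ^ (α : ℂ)).re : ℂ)) + Complex.I * (z.im : ℂ))
        Complex.slitPlane := by
      apply ContinuousOn.add
      · apply Complex.continuous_ofReal.comp_continuousOn
        apply Complex.continuous_re.comp_continuousOn
        intro z hz
        exact (continuousAt_cpow_const hz).continuousWithinAt
      · exact (continuous_const.mul
          (Complex.continuous_ofReal.comp Complex.continuous_im)).continuousOn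
    exact this.congr (fun z _ => hh z)
  -- the inverse
  set g : ℂ → ℂ := Function.invFunOn h Complex.slitPlane with hg
  have hgleft : ∀ z ∈ Complex.slitPlane, g (h z) = z := fun z hz =>
    hinj.leftInvOn_invFunOn hz
  have hgmem : ∀ w ∈ Complex.slitPlane, g w ∈ Complex.slitPlane :=
    fun w hw => hsurj.mapsTo_invFunOn hw
  have hgright : ∀ w ∈ Complex.slitPlane, h (g w) = w := fun w hw =>
    hsurj.rightInvOn_invFunOn hw
  have hgim : ∀ w ∈ Complex.slitPlane, (g w).im = w.im := by
    intro w hw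
    have := congrArg Complex.im (hgright w hw)
    rwa [him] at this
  have hgre : ∀ w ∈ Complex.slitPlane, ((g w) ^ (α:ℂ)).re = w.re := by
    intro w hw
    have := congrArg Complex.re (hgright w hw)
    rwa [hre] at this
  -- continuity of g
  have hgcont : ContinuousOn g Complex.slitPlane := by
    intro w₀ hw₀
    apply ContinuousAt.continuousWithinAt
    set z₀ : ℂ := g w₀ with hz₀def
    have hz₀ : z₀ ∈ Complex.slitPlane := hgmem w₀ hw₀
    have hw₀im : w₀.im = z₀.im := (hgim w₀ hw₀).symm
    have hw₀re : w₀.re = (z₀ ^ (α:ℂ)).re := (hgre w₀ hw₀).symm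
    unfold ContinuousAt
    rw [Metric.tendsto_nhds]
    intro ε hε
    -- choose ε'
    set x₀ : ℝ := z₀.re with hx₀def
    set y₀ : ℝ := z₀.im with hy₀def
    have hε3 : 0 < ε/3 := by linarith
    obtain ⟨ε', hε'pos, hε'le, hmemM, hmemP⟩ :
        ∃ ε' : ℝ, 0 < ε' ∧ ε' ≤ ε/3 ∧
          ((x₀ - ε' : ℝ) : ℂ) + y₀ * Complex.I ∈ Complex.slitPlane ∧
          ((x₀ + ε' : ℝ) : ℂ) + y₀ * Complex.I ∈ Complex.slitPlane := by
      by_cases hy0 : y₀ = 0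
      · have hx₀pos : 0 < x₀ := by
          rcases Complex.mem_slitPlane_iff.1 hz₀ with h1 | h1
          · exact h1
          · exact absurd hy0 h1
        refine ⟨min (ε/3) (x₀/2), lt_min hε3 (by linarith), min_le_left _ _, ?_, ?_⟩
        · apply Or.inl
          have : min (ε/3) (x₀/2) ≤ x₀/2 := min_le_right _ _
          simp only [Complex.add_re, Complex.ofReal_re, hy0, Complex.ofReal_zero, zero_mul,
            Complex.zero_re, add_zero]
          linarith
        · apply Or.inl
          have h1 : 0 < min (ε/3) (x₀/2) := lt_min hε3 (by linarith)
          simp only [Complex.add_re, Complex.ofReal_re, hy0, Complex.ofReal_zero, zero_mul,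
            Complex.zero_re, add_zero]
          linarith
      · exact ⟨ε/3, hε3, le_refl _, Or.inr (by simp [hy0]), Or.inr (by simp [hy0])⟩
    have hmemx₀ : (x₀ : ℂ) + y₀ * Complex.I ∈ Complex.slitPlane := by
      rw [Complex.re_add_im]; exact hz₀
    have hm := aux_strictMonoOn_phi hα1 hα2 y₀
    have hval : ((((x₀:ℝ) : ℂ) + y₀ * Complex.I) ^ (α:ℂ)).re = w₀.re := by
      rw [Complex.re_add_im]; exact hw₀re.symm
    have hltM : ((((x₀ - ε' : ℝ) : ℂ) + y₀ * Complex.I) ^ (α:ℂ)).re < w₀.re := by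
      rw [← hval]
      exact hm hmemM hmemx₀ (by linarith)
    have hltP : w₀.re < ((((x₀ + ε' : ℝ) : ℂ) + y₀ * Complex.I) ^ (α:ℂ)).re := by
      rw [← hval]
      exact hm hmemx₀ hmemP (by linarith)
    -- eventual statements
    have hcontmapM : ContinuousAt
        (fun w : ℂ => ((x₀ - ε' : ℝ) : ℂ) + w.im * Complex.I) w₀ := by fun_prop
    have hcontmapP : ContinuousAt
        (fun w : ℂ => ((x₀ + ε' : ℝ) : ℂ) + w.im * Complex.I) w₀ := by fun_prop
    have hw₀memM : ((x₀ - ε' : ℝ) : ℂ) + w₀.im * Complex.I ∈ Complex.slitPlane := by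
      rw [hw₀im]; exact hmemM
    have hw₀memP : ((x₀ + ε' : ℝ) : ℂ) + w₀.im * Complex.I ∈ Complex.slitPlane := by
      rw [hw₀im]; exact hmemP
    have E1 : ∀ᶠ w in 𝓝 w₀, w ∈ Complex.slitPlane :=
      Complex.isOpen_slitPlane.eventually_mem hw₀
    have E2 : ∀ᶠ w in 𝓝 w₀,
        ((x₀ - ε' : ℝ) : ℂ) + w.im * Complex.I ∈ Complex.slitPlane :=
      hcontmapM.eventually_mem (Complex.isOpen_slitPlane.mem_nhds hw₀memM)
    have E3 : ∀ᶠ w in 𝓝 w₀,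
        ((x₀ + ε' : ℝ) : ℂ) + w.im * Complex.I ∈ Complex.slitPlane :=
      hcontmapP.eventually_mem (Complex.isOpen_slitPlane.mem_nhds hw₀memP)
    have hΦMcont : ContinuousAt
        (fun w : ℂ => ((((x₀ - ε' : ℝ) : ℂ) + w.im * Complex.I) ^ (α:ℂ)).re) w₀ := by
      exact Complex.continuous_re.continuousAt.comp
        (ContinuousAt.comp (f := fun w : ℂ => ((x₀ - ε' : ℝ) : ℂ) + w.im * Complex.I)
          (continuousAt_cpow_const hw₀memM) hcontmapM)
    have hΦPcont : ContinuousAt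
        (fun w : ℂ => ((((x₀ + ε' : ℝ) : ℂ) + w.im * Complex.I) ^ (α:ℂ)).re) w₀ := by
      exact Complex.continuous_re.continuousAt.comp
        (ContinuousAt.comp (f := fun w : ℂ => ((x₀ + ε' : ℝ) : ℂ) + w.im * Complex.I)
          (continuousAt_cpow_const hw₀memP) hcontmapP)
    have E4 : ∀ᶠ w in 𝓝 w₀,
        ((((x₀ - ε' : ℝ) : ℂ) + w.im * Complex.I) ^ (α:ℂ)).re < w.re := by
      apply hΦMcont.eventually_lt Complex.continuous_re.continuousAt
      rw [hw₀im]; exact hltM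
    have E5 : ∀ᶠ w in 𝓝 w₀,
        w.re < ((((x₀ + ε' : ℝ) : ℂ) + w.im * Complex.I) ^ (α:ℂ)).re := by
      apply ContinuousAt.eventually_lt Complex.continuous_re.continuousAt hΦPcont
      rw [hw₀im]; exact hltP
    have E6 : ∀ᶠ w in 𝓝 w₀, |w.im - w₀.im| < ε/3 := by
      have : Tendsto (fun w : ℂ => w.im) (𝓝 w₀) (𝓝 w₀.im) :=
        Complex.continuous_im.continuousAt
      have := Metric.tendsto_nhds.1 this (ε/3) hε3
      simpa [Real.dist_eq] using this
    filter_upwards [E1, E2, E3, E4, E5, E6] with w hw1 hw2 hw3 hw4 hw5 hw6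
    have hzw : g w ∈ Complex.slitPlane := hgmem w hw1
    have hzwim : (g w).im = w.im := hgim w hw1
    have hzwre : (((g w).re : ℂ) + w.im * Complex.I) = g w := by
      rw [← hzwim, Complex.re_add_im]
    have hval' : ((((g w).re : ℝ) : ℂ) + w.im * Complex.I ∈ Complex.slitPlane) := by
      rw [hzwre]; exact hzw
    have hφval : (((((g w).re : ℝ) : ℂ) + w.im * Complex.I) ^ (α:ℂ)).re = w.re := by
      rw [hzwre]; exact hgre w hw1
    have hmw := aux_strictMonoOn_phi hα1 hα2 w.im
    have hlow : x₀ - ε' < (g w).re :=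
      (hmw.lt_iff_lt hw2 hval').1 (by rw [← hφval] at hw4; exact hw4)
    have hhigh : (g w).re < x₀ + ε' :=
      (hmw.lt_iff_lt hval' hw3).1 (by rw [← hφval] at hw5; exact hw5)
    rw [Complex.dist_eq]
    calc ‖g w - g w₀‖ ≤ |(g w - g w₀).re| + |(g w - g w₀).im| :=
          Complex.norm_le_abs_re_add_abs_im _
    _ = |(g w).re - x₀| + |w.im - w₀.im| := by
          rw [Complex.sub_re, Complex.sub_im, hzwim, hgim w₀ hw₀]
    _ < ε' + ε/3 := by
          apply add_lt_add_of_lt_of_le _ hw6.le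
          rw [abs_sub_lt_iff]
          constructor <;> linarith
    _ < ε := by linarith
  -- assemble
  refine ⟨?_, hcont, hbij, ⟨g, hgcont, hgleft⟩, ?_⟩
  · constructor
    · have : (fun z => (h z).re) = fun z => (z ^ (α:ℂ)).re := funext hre
      rw [this]
      exact aux_harmonic_re_cpow α
    · have : (fun z => (h z).im) = fun z : ℂ => z.im := funext him
      rw [this]
      exact aux_harmonic_im
  · -- image statement
    intro s hs
    set A : Set ℂ := Complex.ofReal '' Set.Icc s (s+1) with hA
    have hAsub : A ⊆ Complex.slitPlane := by
      rintro _ ⟨x, hx, rfl⟩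
      exact Complex.ofReal_mem_slitPlane.2 (lt_of_lt_of_le hs hx.1)
    have himgA : h '' A = Complex.ofReal '' Set.Icc (s ^ α) ((s+1) ^ α) := by
      rw [hA, Set.image_image]
      have : ∀ x ∈ Set.Icc s (s+1), h ((x : ℝ) : ℂ) = ((x ^ α : ℝ) : ℂ) := fun x hx =>
        hofreal x (lt_of_lt_of_le hs hx.1)
      rw [Set.image_congr this, ← aux_image_rpow hαpos hs (by linarith), Set.image_image]
    rw [hinj.image_diff, hbij.image_eq, Set.inter_eq_self_of_subset_right hAsub, himgA]
end
end

section
/- Let Ω ⊆ ℂ be open, let h : Ω → ℂ be real-differentiable, let ν : Ω → ℂ satisfy |ν(z)| < 1 for all z ∈ Ω, and suppose h satisfies the second Beltrami equation h_{z̄}(z) = ν(z)·conj(h_z(z)) on Ω. Then for every κ ∈ ℂ with |κ| < 1, the map H(z) = h(z) − κ·conj(h(z)) satisfies H_{z̄}(z) = ((ν(z) − κ)/(1 − conj(κ)ν(z)))·conj(H_z(z)) for all z ∈ Ω. -/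
noncomputable section

lemma aux_fderiv (h : ℂ → ℂ) (κ z v : ℂ) (hd : DifferentiableAt ℝ h z) :
    fderiv ℝ (fun w => h w - κ * (starRingEnd ℂ) (h w)) z v =
      fderiv ℝ h z v - κ * (starRingEnd ℂ) (fderiv ℝ h z v) := by
  have hc : DifferentiableAt ℝ (fun w => (starRingEnd ℂ) (h w)) z :=
    Complex.conjCLE.differentiableAt.comp z hd
  rw [fderiv_fun_sub hd (hc.const_mul κ), fderiv_const_mul hc κ]
  have : fderiv ℝ (fun w => (starRingEnd ℂ) (h w)) z =
      (Complex.conjCLE : ℂ →L[ℝ] ℂ).comp (fderiv ℝ h z) :=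
    Complex.conjCLE.comp_fderiv (f := h) (x := z)
  simp [this]

/-- Affine change of the target transforms the second Beltrami coefficient by
a Möbius transformation. -/
theorem stmt11 (Ω : Set ℂ) (hΩ : IsOpen Ω) (h : ℂ → ℂ)
    (hdiff : ∀ z ∈ Ω, DifferentiableAt ℝ h z)
    (ν : ℂ → ℂ) (hν : ∀ z ∈ Ω, ‖ν z‖ < 1)
    (hbel : ∀ z ∈ Ω, wirtingerZbar h z = ν z * (starRingEnd ℂ) (wirtingerZ h z))
    (κ : ℂ) (hκ : ‖κ‖ < 1) :
    ∀ z ∈ Ω, wirtingerZbar (fun w => h w - κ * (starRingEnd ℂ) (h w)) z =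
      ((ν z - κ) / (1 - (starRingEnd ℂ) κ * ν z)) *
        (starRingEnd ℂ) (wirtingerZ (fun w => h w - κ * (starRingEnd ℂ) (h w)) z) := by
  intro z hz
  have hd := hdiff z hz
  have h1 := aux_fderiv h κ z 1 hd
  have hI := aux_fderiv h κ z Complex.I hd
  set a := fderiv ℝ h z 1 with ha
  set b := fderiv ℝ h z Complex.I with hb
  have hden : (1 : ℂ) - (starRingEnd ℂ) κ * ν z ≠ 0 := by
    have hlt : ‖(starRingEnd ℂ) κ * ν z‖ < 1 := by
      rw [norm_mul, Complex.norm_conj]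
      calc ‖κ‖ * ‖ν z‖ ≤ 1 * ‖ν z‖ :=
            mul_le_mul_of_nonneg_right hκ.le (norm_nonneg _)
        _ < 1 := by simpa using hν z hz
    intro hc
    rw [sub_eq_zero] at hc
    rw [← hc] at hlt
    simp at hlt
  have key := hbel z hz
  unfold wirtingerZbar wirtingerZ at key ⊢
  rw [← ha, ← hb] at key
  simp only [map_div₀, map_sub, map_mul, Complex.conj_I, map_ofNat] at key
  have key' : a + Complex.I * b =
      ν z * ((starRingEnd ℂ) a + Complex.I * (starRingEnd ℂ) b) := by
    field_simp at key
    linear_combination key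
  rw [h1, hI]
  simp only [map_div₀, map_sub, map_mul, Complex.conj_I, Complex.conj_conj, map_ofNat, map_one]
  field_simp
  rw [eq_div_iff (by rw [mul_comm]; exact hden)]
  linear_combination (1 - κ * (starRingEnd ℂ) κ) * key'
end
end

section
/- Define λ(t) = sup over α ∈ (0,1) of α·(t^{1−α} − 1)/(t^{1−α} + 1) for t ≥ 1. Then: (i) for every t > 1, λ(t) ≥ (log t − log(1 + log t))/(2 + log t); and (ii) λ(t) → 1 as t → ∞. -/
noncomputable section

open Real Filter

private lemma mem14 (t : ℝ) (ht : 1 < t) :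
    (Real.log t - Real.log (1 + Real.log t)) / (2 + Real.log t) ∈
      {y : ℝ | ∃ α ∈ Set.Ioo (0 : ℝ) 1, y = α * (t ^ (1 - α) - 1) / (t ^ (1 - α) + 1)} := by
  set L := Real.log t with hL
  have hLpos : 0 < L := Real.log_pos ht
  have h1L : (0:ℝ) < 1 + L := by linarith
  have hlt : 1 + L < t := by
    have := Real.add_one_lt_exp (x := L) (by positivity)
    rw [Real.exp_log (by linarith : (0:ℝ) < t)] at this
    linarith
  have hloglt : Real.log (1 + L) < L := by
    calc Real.log (1 + L) < Real.log t := Real.log_lt_log h1L hlt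
    _ = L := rfl
  have hlogpos : 0 < Real.log (1 + L) := Real.log_pos (by linarith)
  refine ⟨(L - Real.log (1 + L)) / L, ⟨div_pos (by linarith) hLpos, ?_⟩, ?_⟩
  · rw [div_lt_one hLpos]; linarith
  · have hpow : t ^ (1 - (L - Real.log (1 + L)) / L) = 1 + L := by
      rw [Real.rpow_def_of_pos (by linarith : (0:ℝ) < t)]
      have : (1 - (L - Real.log (1 + L)) / L) * Real.log t = Real.log (1 + L) := by
        field_simp
        rw [← hL]; ring
      rw [mul_comm, this, Real.exp_log h1L]
    rw [hpow]
    have h2L : (2 : ℝ) + L ≠ 0 := by positivity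
    field_simp
    ring

private lemma ub14 (t : ℝ) (ht : 1 ≤ t) :
    ∀ y ∈ {y : ℝ | ∃ α ∈ Set.Ioo (0 : ℝ) 1, y = α * (t ^ (1 - α) - 1) / (t ^ (1 - α) + 1)},
      y ≤ 1 := by
  rintro y ⟨α, ⟨hα0, hα1⟩, rfl⟩
  have hX : (1:ℝ) ≤ t ^ (1 - α) := Real.one_le_rpow ht (by linarith)
  rw [div_le_one (by linarith)]
  nlinarith

/-- Properties of the function `λ(t) = sup_{0<α<1} α (t^{1-α}-1)/(t^{1-α}+1)`. -/
theorem stmt14 (lam : ℝ → ℝ)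
    (hlam : ∀ t : ℝ, 1 ≤ t → lam t =
      sSup {y : ℝ | ∃ α ∈ Set.Ioo (0 : ℝ) 1, y = α * (t ^ (1 - α) - 1) / (t ^ (1 - α) + 1)}) :
    (∀ t : ℝ, 1 < t →
      (Real.log t - Real.log (1 + Real.log t)) / (2 + Real.log t) ≤ lam t) ∧
    Filter.Tendsto lam Filter.atTop (nhds 1) := by
  have hlow : ∀ t : ℝ, 1 < t →
      (Real.log t - Real.log (1 + Real.log t)) / (2 + Real.log t) ≤ lam t := by
    intro t ht
    rw [hlam t ht.le]
    exact le_csSup ⟨1, fun y hy => ub14 t ht.le y hy⟩ (mem14 t ht)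
  refine ⟨hlow, ?_⟩
  have hup : ∀ t : ℝ, 1 < t → lam t ≤ 1 := by
    intro t ht
    rw [hlam t ht.le]
    exact Real.sSup_le (ub14 t ht.le) zero_le_one
  -- lower bound tends to 1
  have haux : Tendsto (fun L : ℝ => (L - Real.log (1 + L)) / (2 + L)) atTop (nhds 1) := by
    have h1 : Tendsto (fun L : ℝ => Real.log (1 + L) / (2 + L)) atTop (nhds 0) := by
      have := Real.tendsto_pow_log_div_mul_add_atTop 1 1 1 one_ne_zero
      simp only [pow_one, one_mul] at this
      have h' := this.comp (tendsto_atTop_add_const_left atTop 1 tendsto_id)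
      refine h'.congr fun L => ?_
      simp only [Function.comp, id]
      congr 1 <;> ring
    have h2 : Tendsto (fun L : ℝ => (2:ℝ) / (2 + L)) atTop (nhds 0) := by
      have hadd : Tendsto (fun L : ℝ => 2 + L) atTop atTop :=
        tendsto_atTop_add_const_left atTop 2 tendsto_id
      have h : Tendsto (fun L : ℝ => (2 + L)⁻¹) atTop (nhds 0) :=
        (tendsto_inv_atTop_zero (𝕜 := ℝ)).comp hadd
      have h2 := h.const_mul (2:ℝ)
      simpa [div_eq_mul_inv] using h2
    have h3 : Tendsto (fun L : ℝ => 1 - (Real.log (1 + L) / (2 + L) + 2 / (2 + L)))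
        atTop (nhds 1) := by
      have := (h1.add h2).const_sub 1
      simpa using this
    refine h3.congr' ?_
    filter_upwards [eventually_gt_atTop (0:ℝ)] with L hL
    have : (2:ℝ) + L ≠ 0 := by positivity
    field_simp
    ring
  have hlowlim : Tendsto (fun t : ℝ =>
      (Real.log t - Real.log (1 + Real.log t)) / (2 + Real.log t)) atTop (nhds 1) :=
    haux.comp Real.tendsto_log_atTop
  refine tendsto_of_tendsto_of_tendsto_of_le_of_le' hlowlim tendsto_const_nhds ?_ ?_
  · filter_upwards [eventually_gt_atTop (1:ℝ)] with t ht using hlow t ht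
  · filter_upwards [eventually_gt_atTop (1:ℝ)] with t ht using hup t ht
end
end
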